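/- arXiv:0912.5034 — 12 statements merged into one kernel-verified Lean document; each statement's English description precedes it below -/
import Mathlib

section
/- The polynomials A_n and B_n produced by the recursion satisfy the identity B_n(z)·B_n^{♯n}(z) − A_n(z)·A_n^{♯n}(z) = ( Π_{j=0}^{n} (1 − |γ_j|²) ) · z^n as an identity of polynomials in ℂ[z]. -/
open Polynomial

/-- The pair `(A_j, B_j)` of polynomials from the recursion (1.8a):
`A_0 = γ_n`, `B_0 = 1`, `A_{j+1}(z) = z·A_j(z) + γ_{n-j-1}·B_j(z)`,
`B_{j+1}(z) = z·conj(γ_{n-j-1})·A_j(z) + B_j(z)`. -/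
noncomputable def schurAB (γ : ℕ → ℂ) (n : ℕ) : ℕ → Polynomial ℂ × Polynomial ℂ
  | 0 => (C (γ n), 1)
  | j + 1 =>
      (X * (schurAB γ n j).1 + C (γ (n - j - 1)) * (schurAB γ n j).2,
       X * C (starRingEnd ℂ (γ (n - j - 1))) * (schurAB γ n j).1 + (schurAB γ n j).2)

/-- The reflection `P^{♯k}`: the coefficient of `z^j` is `conj` of the coefficient of
`z^{k-j}` of `P`, i.e. `P^{♯k}(z) = z^k · conj(P(1/conj z))` for `P` of degree ≤ k. -/
noncomputable def sharp (k : ℕ) (P : Polynomial ℂ) : Polynomial ℂ :=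
  ∑ j ∈ Finset.range (k + 1), C (starRingEnd ℂ (P.coeff (k - j))) * X ^ j

lemma sharp_add (k : ℕ) (P Q : Polynomial ℂ) :
    sharp k (P + Q) = sharp k P + sharp k Q := by
  simp [sharp, map_add, add_mul, Finset.sum_add_distrib]

lemma sharp_C_mul (k : ℕ) (c : ℂ) (P : Polynomial ℂ) :
    sharp k (C c * P) = C (starRingEnd ℂ c) * sharp k P := by
  simp [sharp, map_mul, Finset.mul_sum, mul_assoc]

lemma sharp_X_mul (k : ℕ) (P : Polynomial ℂ) : sharp (k + 1) (X * P) = sharp k P := by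
  unfold sharp
  rw [Finset.sum_range_succ]
  have h0 : (X * P).coeff (k + 1 - (k + 1)) = 0 := by simp
  rw [h0]
  simp only [map_zero, C_0, zero_mul, add_zero]
  apply Finset.sum_congr rfl
  intro j hj
  have hj' : j ≤ k := Nat.lt_succ_iff.mp (Finset.mem_range.mp hj)
  rw [Nat.succ_sub hj', coeff_X_mul]

lemma sharp_shift (k : ℕ) (P : Polynomial ℂ) (h : P.coeff (k + 1) = 0) :
    sharp (k + 1) P = X * sharp k P := by
  unfold sharp
  rw [Finset.sum_range_succ']
  simp only [Nat.sub_zero, pow_zero, mul_one, h, map_zero, C_0, add_zero, Finset.mul_sum]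
  apply Finset.sum_congr rfl
  intro j hj
  have : k + 1 - (j + 1) = k - j := by omega
  rw [this]; ring

lemma schurAB_deg (γ : ℕ → ℂ) (n : ℕ) : ∀ j,
    (schurAB γ n j).1.natDegree ≤ j ∧ (schurAB γ n j).2.natDegree ≤ j := by
  intro j
  induction j with
  | zero => constructor <;> simp [schurAB, natDegree_C]
  | succ j ih =>
    constructor
    · refine le_trans (natDegree_add_le _ _) (max_le ?_ ?_)
      · refine le_trans (natDegree_mul_le) ?_
        have hx : (X : Polynomial ℂ).natDegree ≤ 1 := natDegree_X_le
        omega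
      · exact le_trans (natDegree_mul_le) (by simp [natDegree_C]; omega)
    · refine le_trans (natDegree_add_le _ _) (max_le ?_ ?_)
      · refine le_trans (natDegree_mul_le) ?_
        have h1 : (X * C (starRingEnd ℂ (γ (n - j - 1)))).natDegree ≤ 1 :=
          le_trans natDegree_mul_le (by simp [natDegree_C, natDegree_X_le])
        omega
      · omega

lemma key (γ : ℕ → ℂ) (n : ℕ) : ∀ j,
    (schurAB γ n j).2 * sharp j (schurAB γ n j).2 -
      (schurAB γ n j).1 * sharp j (schurAB γ n j).1 =
    C ((1 - starRingEnd ℂ (γ n) * γ n) *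
        ∏ i ∈ Finset.range j, (1 - starRingEnd ℂ (γ (n - i - 1)) * γ (n - i - 1))) * X ^ j := by
  intro j
  induction j with
  | zero =>
    have h0 : schurAB γ n 0 = (C (γ n), 1) := rfl
    rw [h0]
    simp only [sharp]
    simp
    ring
  | succ j ih =>
    set A := (schurAB γ n j).1 with hA
    set B := (schurAB γ n j).2 with hB
    set g := γ (n - j - 1) with hg
    have hdA : A.coeff (j + 1) = 0 :=
      coeff_eq_zero_of_natDegree_lt (Nat.lt_succ_of_le (schurAB_deg γ n j).1)
    have hdB : B.coeff (j + 1) = 0 :=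
      coeff_eq_zero_of_natDegree_lt (Nat.lt_succ_of_le (schurAB_deg γ n j).2)
    have hA' : (schurAB γ n (j + 1)).1 = X * A + C g * B := rfl
    have hB' : (schurAB γ n (j + 1)).2 = X * C (starRingEnd ℂ g) * A + B := rfl
    have hsA' : sharp (j + 1) (schurAB γ n (j + 1)).1 =
        sharp j A + C (starRingEnd ℂ g) * (X * sharp j B) := by
      rw [hA', sharp_add, sharp_X_mul, sharp_C_mul, sharp_shift j B hdB]
    have hsB' : sharp (j + 1) (schurAB γ n (j + 1)).2 =
        C g * sharp j A + X * sharp j B := by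
      rw [hB', sharp_add, mul_assoc, sharp_X_mul, sharp_C_mul, sharp_shift j B hdB,
        Complex.conj_conj]
    rw [hsA', hsB', hA', hB', Finset.prod_range_succ]
    have expand : (X * C (starRingEnd ℂ g) * A + B) * (C g * sharp j A + X * sharp j B) -
        (X * A + C g * B) * (sharp j A + C (starRingEnd ℂ g) * (X * sharp j B)) =
        (1 - C (starRingEnd ℂ g) * C g) * X *
          (B * sharp j B - A * sharp j A) := by ring
    rw [expand, ih]
    rw [← hg]
    push_cast [map_mul, map_sub, map_one]
    ring

/-- `B_n(z)·B_n^{♯n}(z) - A_n(z)·A_n^{♯n}(z) = (Π_{j=0}^{n} (1-|γ_j|²))·z^n`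
as an identity of polynomials in `ℂ[z]`. -/
theorem stmt_4 (n : ℕ) (hn : 1 ≤ n) (γ : ℕ → ℂ)
    (hγ : ∀ j ≤ n, ‖γ j‖ < 1) :
    (schurAB γ n n).2 * sharp n (schurAB γ n n).2 -
      (schurAB γ n n).1 * sharp n (schurAB γ n n).1 =
    C (∏ j ∈ Finset.range (n + 1), (1 - (‖γ j‖ : ℂ) ^ 2)) * X ^ n := by
  rw [key γ n n]
  have habs : ∀ z : ℂ, (1 : ℂ) - (‖z‖ : ℂ) ^ 2 = 1 - starRingEnd ℂ z * z := by
    intro z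
    have h1 : ((‖z‖ : ℂ)) ^ 2 = (Complex.normSq z : ℂ) := by
      norm_cast; exact Complex.sq_norm z
    rw [h1, ← Complex.mul_conj, mul_comm]
  have hprod : ∏ j ∈ Finset.range (n + 1), (1 - (‖γ j‖ : ℂ) ^ 2) =
      (1 - starRingEnd ℂ (γ n) * γ n) *
        ∏ i ∈ Finset.range n, (1 - starRingEnd ℂ (γ (n - i - 1)) * γ (n - i - 1)) := by
    simp only [habs]
    rw [Finset.prod_range_succ, mul_comm]
    congr 1
    rw [← Finset.prod_range_reflect (fun j => 1 - starRingEnd ℂ (γ j) * γ j) n]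
    apply Finset.prod_congr rfl
    intro i hi
    have : n - 1 - i = n - i - 1 := by omega
    rw [this]
  rw [hprod]
end

section
/- Writing a_j and b_j for the coefficients of z^j in A_n and B_n respectively, for every ℓ with 0 ≤ ℓ ≤ n−1 one has Σ_{j=0}^{ℓ} ( b_{n+j−ℓ}·conj(b_j) − a_{n+j−ℓ}·conj(a_j) ) = 0. -/
open Polynomial

namespace Stmt5Aux

noncomputable def cstar (d : ℕ) (p : Polynomial ℂ) : Polynomial ℂ :=
  reflect d (p.map (starRingEnd ℂ))

lemma cstar_coeff (d : ℕ) (p : Polynomial ℂ) (k : ℕ) :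
    (cstar d p).coeff k = starRingEnd ℂ (p.coeff (revAt d k)) := by
  simp [cstar, coeff_reflect, coeff_map]

lemma deg (γ : ℕ → ℂ) (n : ℕ) : ∀ j, ((schurAB γ n j).1).natDegree ≤ j ∧
    ((schurAB γ n j).2).natDegree ≤ j := by
  intro j
  induction j with
  | zero => exact ⟨by simp [schurAB, natDegree_C], by simp [schurAB]⟩
  | succ j ih =>
    constructor
    · refine le_trans (natDegree_add_le _ _) (max_le ?_ ?_)
      · refine le_trans (natDegree_mul_le) ?_
        have h1 := ih.1
        have h2 := natDegree_X_le (R := ℂ)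
        omega
      · refine le_trans (natDegree_mul_le) ?_
        have h2 := ih.2
        have : (C (γ (n - j - 1))).natDegree = 0 := natDegree_C _
        omega
    · refine le_trans (natDegree_add_le _ _) (max_le ?_ ?_)
      · refine le_trans (natDegree_mul_le) ?_
        have h1 := ih.1
        have h2 := natDegree_X_le (R := ℂ)
        have h3 : (C (starRingEnd ℂ (γ (n - j - 1)))).natDegree = 0 := natDegree_C _
        have h4 := natDegree_mul_le (p := (X : ℂ[X])) (q := C (starRingEnd ℂ (γ (n - j - 1))))
        omega
      · exact Nat.le_succ_of_le ih.2

lemma reflect_succ (j : ℕ) (p : Polynomial ℂ) (h : p.natDegree ≤ j) :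
    reflect (j + 1) p = reflect j p * X := by
  have := reflect_mul p (1 : ℂ[X]) h (by simp : (1 : ℂ[X]).natDegree ≤ 1)
  simpa [reflect_one] using this

lemma cstar_add (d : ℕ) (p q : Polynomial ℂ) :
    cstar d (p + q) = cstar d p + cstar d q := by
  simp [cstar, Polynomial.map_add, reflect_add]

lemma cstar_C_mul (d : ℕ) (c : ℂ) (p : Polynomial ℂ) :
    cstar d (C c * p) = C (starRingEnd ℂ c) * cstar d p := by
  simp [cstar, Polynomial.map_mul, reflect_C_mul]

lemma cstar_X_mul (j : ℕ) (p : Polynomial ℂ) (h : p.natDegree ≤ j) :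
    cstar (j + 1) (X * p) = cstar j p := by
  have hm : (p.map (starRingEnd ℂ)).natDegree ≤ j := le_trans natDegree_map_le h
  have := reflect_mul (X : ℂ[X]) (p.map (starRingEnd ℂ)) (natDegree_X_le) hm
  simp only [cstar, Polynomial.map_mul, map_X]
  rw [show j + 1 = 1 + j by ring, this]
  simp

lemma cstar_succ (j : ℕ) (p : Polynomial ℂ) (h : p.natDegree ≤ j) :
    cstar (j + 1) p = cstar j p * X := by
  have hm : (p.map (starRingEnd ℂ)).natDegree ≤ j := le_trans natDegree_map_le h
  simp only [cstar]
  exact reflect_succ j _ hm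

/-- The key invariant. -/
lemma key (γ : ℕ → ℂ) (n : ℕ) :
    ∀ j, ∃ c : ℂ, (schurAB γ n j).2 * cstar j (schurAB γ n j).2
      - (schurAB γ n j).1 * cstar j (schurAB γ n j).1 = C c * X ^ j := by
  intro j
  induction j with
  | zero =>
    refine ⟨1 - γ n * starRingEnd ℂ (γ n), ?_⟩
    simp [schurAB, cstar, reflect_C, map_sub, map_one, map_mul]
  | succ j ih =>
    obtain ⟨c, hc⟩ := ih
    refine ⟨(1 - γ (n - j - 1) * starRingEnd ℂ (γ (n - j - 1))) * c, ?_⟩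
    set g := γ (n - j - 1)
    set A := (schurAB γ n j).1
    set B := (schurAB γ n j).2
    have hA : A.natDegree ≤ j := (deg γ n j).1
    have hB : B.natDegree ≤ j := (deg γ n j).2
    have e1 : (schurAB γ n (j+1)).1 = X * A + C g * B := rfl
    have e2 : (schurAB γ n (j+1)).2 = X * C (starRingEnd ℂ g) * A + B := rfl
    have s1 : cstar (j+1) (X * A + C g * B)
        = cstar j A + C (starRingEnd ℂ g) * (cstar j B * X) := by
      rw [cstar_add, cstar_X_mul j A hA, cstar_C_mul, cstar_succ j B hB]
    have s2 : cstar (j+1) (X * C (starRingEnd ℂ g) * A + B)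
        = C g * cstar j A + cstar j B * X := by
      rw [cstar_add, cstar_succ j B hB]
      have : (X : ℂ[X]) * C (starRingEnd ℂ g) * A = X * (C (starRingEnd ℂ g) * A) := by ring
      rw [this, cstar_X_mul j _ (le_trans natDegree_mul_le (by simp [natDegree_C, hA])),
        cstar_C_mul]
      simp
    rw [e1, e2, s1, s2]
    have expand : (X * C (starRingEnd ℂ g) * A + B) * (C g * cstar j A + cstar j B * X)
        - (X * A + C g * B) * (cstar j A + C (starRingEnd ℂ g) * (cstar j B * X))
        = (1 - C g * C (starRingEnd ℂ g)) * X * (B * cstar j B - A * cstar j A) := by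
      ring
    rw [expand, hc]
    push_cast [map_sub, map_mul, map_one]
    ring

end Stmt5Aux

/-- writing `a_j`, `b_j` for the coefficients of `z^j` in `A_n`, `B_n`,
for every `0 ≤ ℓ ≤ n-1` one has
`Σ_{j=0}^{ℓ} ( b_{n+j-ℓ}·conj(b_j) - a_{n+j-ℓ}·conj(a_j) ) = 0`. -/
theorem stmt_5 (n : ℕ) (hn : 1 ≤ n) (γ : ℕ → ℂ)
    (hγ : ∀ j ≤ n, ‖γ j‖ < 1)
    (a b : ℕ → ℂ) (ha : ∀ j, a j = ((schurAB γ n n).1).coeff j)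
    (hb : ∀ j, b j = ((schurAB γ n n).2).coeff j) :
    ∀ ℓ < n, ∑ j ∈ Finset.range (ℓ + 1),
      (b (n + j - ℓ) * starRingEnd ℂ (b j) - a (n + j - ℓ) * starRingEnd ℂ (a j)) = 0 := by
  intro ℓ hℓ
  classical
  obtain ⟨c, hc⟩ := Stmt5Aux.key γ n n
  set A := (schurAB γ n n).1 with hAdef
  set B := (schurAB γ n n).2 with hBdef
  have hA : A.natDegree ≤ n := (Stmt5Aux.deg γ n n).1
  have hB : B.natDegree ≤ n := (Stmt5Aux.deg γ n n).2
  -- coefficient of X^(2n-ℓ) in D is 0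
  have hm : (2 * n - ℓ) ≠ n := by omega
  have hcoeff : (B * Stmt5Aux.cstar n B - A * Stmt5Aux.cstar n A).coeff (2 * n - ℓ) = 0 := by
    rw [hc, coeff_C_mul, coeff_X_pow, if_neg hm, mul_zero]
  rw [coeff_sub, coeff_mul, coeff_mul] at hcoeff
  rw [Finset.Nat.sum_antidiagonal_eq_sum_range_succ_mk, Finset.Nat.sum_antidiagonal_eq_sum_range_succ_mk,
    ← Finset.sum_sub_distrib] at hcoeff
  -- now hcoeff : Σ_{i ∈ range (2n-ℓ+1)} (B.coeff i * (cstar n B).coeff (2n-ℓ-i) - ...) = 0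
  rw [← hcoeff]
  -- restrict to Ico (n-ℓ) (n+1)
  have hzero : ∀ i ∈ Finset.range (2 * n - ℓ + 1), i ∉ Finset.Ico (n - ℓ) (n + 1) →
      (B.coeff i * (Stmt5Aux.cstar n B).coeff (2 * n - ℓ - i)
        - A.coeff i * (Stmt5Aux.cstar n A).coeff (2 * n - ℓ - i)) = 0 := by
    intro i hi hni
    simp only [Finset.mem_range] at hi
    simp only [Finset.mem_Ico, not_and_or, not_le, not_lt] at hni
    rcases hni with h | h
    · -- i < n - ℓ : then 2n-ℓ-i > n, cstar coeff is conj of coeff at revAt n (2n-ℓ-i) = 2n-ℓ-i > n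
      have hgt : n < 2 * n - ℓ - i := by omega
      have hrev : revAt n (2 * n - ℓ - i) = 2 * n - ℓ - i := revAt_eq_self_of_lt hgt
      rw [Stmt5Aux.cstar_coeff, Stmt5Aux.cstar_coeff, hrev,
        coeff_eq_zero_of_natDegree_lt (lt_of_le_of_lt hB hgt),
        coeff_eq_zero_of_natDegree_lt (lt_of_le_of_lt hA hgt)]
      simp
    · -- i ≥ n+1
      rw [coeff_eq_zero_of_natDegree_lt (lt_of_le_of_lt hB (by omega)),
        coeff_eq_zero_of_natDegree_lt (lt_of_le_of_lt hA (by omega))]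
      simp
  rw [← Finset.sum_subset (by intro i hi; simp only [Finset.mem_Ico] at hi; simp only [Finset.mem_range]; omega : Finset.Ico (n - ℓ) (n + 1) ⊆ Finset.range (2 * n - ℓ + 1)) hzero]
  rw [Finset.sum_Ico_eq_sum_range]
  have hlen : n + 1 - (n - ℓ) = ℓ + 1 := by omega
  rw [hlen]
  apply Finset.sum_congr rfl
  intro j hj
  simp only [Finset.mem_range] at hj
  have h1 : n - ℓ + j = n + j - ℓ := by omega
  have h2 : 2 * n - ℓ - (n + j - ℓ) = n - j := by omega
  have h3 : revAt n (n - j) = j := by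
    rw [revAt_le (by omega : n - j ≤ n)]; omega
  rw [h1, h2, Stmt5Aux.cstar_coeff, Stmt5Aux.cstar_coeff, h3, ha, ha, hb, hb]
end

section
/- Define n×n lower triangular Toeplitz matrices over ℂ by: A has (i,j) entry a_{n−i+j} for i ≥ j and 0 otherwise; B has (i,j) entry b_{n−i+j} for i ≥ j and 0 otherwise; Ã has (i,j) entry conj(a_{i−j}) for i ≥ j and 0 otherwise; B̃ has (i,j) entry conj(b_{i−j}) for i ≥ j and 0 otherwise (indices i, j running from 1 to n), where a_j and b_j are the coefficients of z^j in A_n and B_n. Then B·B̃ = A·Ã, and consequently for any vectors α, β ∈ ℂ^n, the equation B̃β + Aα = 0 implies the equation Ãβ + Bα = 0. -/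
open Polynomial

/-- Lower triangular Toeplitz matrix with `(i,j)` entry `c (n - i + j)` for `i ≥ j`
(indices `1,…,n`, realized zero-based on `Fin n`), zero otherwise. -/
noncomputable def toepUp (n : ℕ) (c : ℕ → ℂ) : Matrix (Fin n) (Fin n) ℂ :=
  Matrix.of fun i j => if (j : ℕ) ≤ (i : ℕ) then c (n - ((i : ℕ) - (j : ℕ))) else 0

/-- Lower triangular Toeplitz matrix with `(i,j)` entry `conj (c (i - j))` for `i ≥ j`
(indices `1,…,n`, realized zero-based on `Fin n`), zero otherwise. -/
noncomputable def toepLowConj (n : ℕ) (c : ℕ → ℂ) : Matrix (Fin n) (Fin n) ℂ :=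
  Matrix.of fun i j => if (j : ℕ) ≤ (i : ℕ) then starRingEnd ℂ (c ((i : ℕ) - (j : ℕ))) else 0

section StmtSixHelpers
open Finset

noncomputable def tilde (j : ℕ) (P : Polynomial ℂ) : Polynomial ℂ :=
  reflect j (P.map (starRingEnd ℂ))

lemma coeff_tilde {j : ℕ} (P : Polynomial ℂ) {t : ℕ} (ht : t ≤ j) :
    (tilde j P).coeff t = starRingEnd ℂ (P.coeff (j - t)) := by
  simp [tilde, coeff_reflect, revAt_le ht, coeff_map]

lemma coeff_tilde_of_gt {j : ℕ} {P : Polynomial ℂ} (hP : P.natDegree ≤ j) {t : ℕ} (ht : j < t) :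
    (tilde j P).coeff t = 0 := by
  rw [tilde, coeff_reflect, revAt_eq_self_of_lt ht, coeff_map,
    coeff_eq_zero_of_natDegree_lt (lt_of_le_of_lt hP ht), map_zero]

lemma tilde_X_mul {j : ℕ} {P : Polynomial ℂ} (hP : P.natDegree ≤ j) :
    tilde (j+1) (X * P) = tilde j P := by
  have h := reflect_mul (X : Polynomial ℂ) (P.map (starRingEnd ℂ))
    (F := 1) (G := j) natDegree_X_le (natDegree_map_le.trans hP)
  rw [tilde, Polynomial.map_mul, map_X, add_comm j 1, h, reflect_one_X, one_mul, tilde]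

lemma tilde_succ {j : ℕ} {P : Polynomial ℂ} (hP : P.natDegree ≤ j) :
    tilde (j+1) P = X * tilde j P := by
  have h := reflect_mul (1 : Polynomial ℂ) (P.map (starRingEnd ℂ))
    (F := 1) (G := j) (by simp) (natDegree_map_le.trans hP)
  rw [tilde, show P.map (starRingEnd ℂ) = 1 * P.map (starRingEnd ℂ) by ring, add_comm j 1, h,
    reflect_one, pow_one, tilde]

lemma schur_key (γ : ℕ → ℂ) (n : ℕ) : ∀ j : ℕ,
    ((schurAB γ n j).1).natDegree ≤ j ∧ ((schurAB γ n j).2).natDegree ≤ j ∧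
    ∃ c : ℂ, (schurAB γ n j).2 * tilde j (schurAB γ n j).2 =
      (schurAB γ n j).1 * tilde j (schurAB γ n j).1 + C c * X ^ j := by
  intro j
  induction j with
  | zero =>
    refine ⟨by simp [schurAB], by simp [schurAB], 1 - γ n * starRingEnd ℂ (γ n), ?_⟩
    have h1 : tilde 0 (1 : Polynomial ℂ) = 1 := by
      simp [tilde, reflect_one]
    have h2 : tilde 0 (C (γ n)) = C (starRingEnd ℂ (γ n)) := by
      simp [tilde, reflect_C]
    simp only [schurAB, h1, h2, map_sub, map_mul, map_one]
    ring
  | succ j ih =>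
    obtain ⟨hA, hB, c, hc⟩ := ih
    set A := (schurAB γ n j).1
    set B := (schurAB γ n j).2
    set g := γ (n - j - 1)
    have hA' : (schurAB γ n (j+1)).1 = X * A + C g * B := rfl
    have hB' : (schurAB γ n (j+1)).2 = X * C (starRingEnd ℂ g) * A + B := rfl
    have degA' : ((schurAB γ n (j+1)).1).natDegree ≤ j + 1 := by
      rw [hA']
      refine (natDegree_add_le _ _).trans (max_le ?_ ?_)
      · exact natDegree_mul_le.trans (by have := natDegree_X_le (R := ℂ); omega)
      · exact natDegree_mul_le.trans (by have : (C g).natDegree = 0 := natDegree_C g; omega)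
    have degB' : ((schurAB γ n (j+1)).2).natDegree ≤ j + 1 := by
      rw [hB']
      refine (natDegree_add_le _ _).trans (max_le ?_ ?_)
      · refine natDegree_mul_le.trans ?_
        have h1 : (X * C (starRingEnd ℂ g) : Polynomial ℂ).natDegree ≤ 1 :=
          natDegree_mul_le.trans
            (by have := natDegree_X_le (R := ℂ); have : (C (starRingEnd ℂ g)).natDegree = 0 := natDegree_C _; omega)
        omega
      · omega
    refine ⟨degA', degB', (1 - g * starRingEnd ℂ g) * c, ?_⟩
    have tA' : tilde (j+1) (schurAB γ n (j+1)).1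
        = tilde j A + C (starRingEnd ℂ g) * (X * tilde j B) := by
      rw [hA', tilde, Polynomial.map_add, reflect_add, Polynomial.map_mul, map_X,
        Polynomial.map_mul, map_C]
      rw [reflect_C_mul]
      have e1 : reflect (j+1) (X * A.map (starRingEnd ℂ)) = tilde j A := by
        have := tilde_X_mul (P := A) hA
        rw [tilde, Polynomial.map_mul, map_X] at this; exact this
      have e2 : reflect (j+1) (B.map (starRingEnd ℂ)) = X * tilde j B := by
        have := tilde_succ (P := B) hB
        rw [tilde] at this; exact this
      rw [e1, e2]
    have tB' : tilde (j+1) (schurAB γ n (j+1)).2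
        = C g * tilde j A + X * tilde j B := by
      rw [hB', tilde, Polynomial.map_add, reflect_add, Polynomial.map_mul, Polynomial.map_mul,
        map_X, map_C]
      have e2 : reflect (j+1) (B.map (starRingEnd ℂ)) = X * tilde j B := by
        have := tilde_succ (P := B) hB
        rw [tilde] at this; exact this
      have e1 : reflect (j+1) (X * C (starRingEnd ℂ (starRingEnd ℂ g)) * A.map (starRingEnd ℂ))
          = C g * tilde j A := by
        rw [Complex.conj_conj, mul_comm (X : Polynomial ℂ) (C g), mul_assoc, reflect_C_mul]
        congr 1
        have := tilde_X_mul (P := A) hA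
        rw [tilde, Polynomial.map_mul, map_X] at this; exact this
      rw [e1, e2]
    rw [tA', tB', hA', hB']
    have hCc : (C ((1 - g * starRingEnd ℂ g) * c) : Polynomial ℂ)
        = (1 - C g * C (starRingEnd ℂ g)) * C c := by
      simp [map_mul, map_sub]
    rw [hCc]
    linear_combination (X * (1 - C g * C (starRingEnd ℂ g))) * hc

lemma coeff_mul_tilde (n : ℕ) (P : Polynomial ℂ) (hP : P.natDegree ≤ n) (d : ℕ) (hd : d ≤ n) :
    (P * tilde n P).coeff (2*n - d) =
      ∑ s ∈ range (d+1), P.coeff (n - d + s) * starRingEnd ℂ (P.coeff s) := by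
  rw [coeff_mul, Finset.Nat.sum_antidiagonal_eq_sum_range_succ_mk]
  rw [← Finset.sum_subset (s₁ := Finset.Icc (n - d) n) (by
      intro p hp
      simp only [mem_Icc, mem_range] at hp ⊢
      omega)
    (by
      intro p hp hnp
      simp only [mem_Icc, mem_range] at hp hnp
      rcases lt_or_ge p (n - d) with h | h
      · rw [coeff_tilde_of_gt hP (by omega), mul_zero]
      · rw [coeff_eq_zero_of_natDegree_lt (by omega), zero_mul])]
  rw [show Finset.Icc (n - d) n = Finset.Ico (n - d) (n + 1) by rfl, Finset.sum_Ico_eq_sum_range]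
  rw [show n + 1 - (n - d) = d + 1 by omega]
  refine Finset.sum_congr rfl fun s hs => ?_
  simp only [mem_range] at hs
  rw [show 2*n - d - (n - d + s) = n - s by omega,
    coeff_tilde P (by omega), show n - (n - s) = s by omega]

noncomputable def toepGen (n : ℕ) (f : ℕ → ℂ) : Matrix (Fin n) (Fin n) ℂ :=
  Matrix.of fun i j => if (j : ℕ) ≤ (i : ℕ) then f ((i : ℕ) - (j : ℕ)) else 0

lemma toepGen_mul_apply (n : ℕ) (f g : ℕ → ℂ) (i k : Fin n) :
    (toepGen n f * toepGen n g) i k =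
      if (k : ℕ) ≤ (i : ℕ) then
        ∑ s ∈ range ((i : ℕ) - (k : ℕ) + 1), f ((i : ℕ) - (k : ℕ) - s) * g s
      else 0 := by
  rw [Matrix.mul_apply]
  have hrw : ∀ j : Fin n, toepGen n f i j * toepGen n g j k =
      (fun j : ℕ => (if j ≤ (i : ℕ) then f ((i : ℕ) - j) else 0) *
        (if (k : ℕ) ≤ j then g (j - (k : ℕ)) else 0)) (j : ℕ) := fun j => rfl
  rw [Fintype.sum_congr _ _ hrw, Fin.sum_univ_eq_sum_range
    (fun j => (if j ≤ (i:ℕ) then f ((i:ℕ) - j) else 0) *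
      (if (k:ℕ) ≤ j then g (j - (k:ℕ)) else 0)) n]
  by_cases hki : (k : ℕ) ≤ (i : ℕ)
  · rw [if_pos hki]
    rw [← Finset.sum_subset (s₁ := Finset.Ico (k : ℕ) ((i : ℕ) + 1))
        (by intro p hp; simp only [mem_Ico, mem_range] at hp ⊢; have := i.isLt; omega)
        (by intro p hp hnp
            simp only [mem_Ico, mem_range] at hp hnp
            rcases le_or_gt p (i : ℕ) with h | h
            · simp [show ¬ ((k:ℕ) ≤ p) by omega]
            · simp [show ¬ (p ≤ (i:ℕ)) by omega])]
    rw [Finset.sum_Ico_eq_sum_range, show (i : ℕ) + 1 - (k : ℕ) = (i : ℕ) - (k : ℕ) + 1 by omega]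
    refine Finset.sum_congr rfl fun s hs => ?_
    simp only [mem_range] at hs
    simp [show (k:ℕ) + s ≤ (i:ℕ) by omega, show (k:ℕ) ≤ (k:ℕ) + s by omega,
      show (i:ℕ) - ((k:ℕ) + s) = (i:ℕ) - (k:ℕ) - s by omega,
      show (k:ℕ) + s - (k:ℕ) = s by omega]
  · rw [if_neg hki]
    refine Finset.sum_eq_zero fun p hp => ?_
    rcases le_or_gt p (i : ℕ) with h | h
    · simp [show ¬ ((k:ℕ) ≤ p) by omega]
    · simp [show ¬ (p ≤ (i:ℕ)) by omega]

lemma toepGen_comm (n : ℕ) (f g : ℕ → ℂ) :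
    toepGen n f * toepGen n g = toepGen n g * toepGen n f := by
  ext i k
  rw [toepGen_mul_apply, toepGen_mul_apply]
  by_cases hki : (k : ℕ) ≤ (i : ℕ)
  · rw [if_pos hki, if_pos hki]
    set d := (i : ℕ) - (k : ℕ)
    rw [← Finset.sum_range_reflect (fun s => g (d - s) * f s) (d + 1)]
    refine Finset.sum_congr rfl fun s hs => ?_
    simp only [mem_range] at hs
    rw [show d + 1 - 1 - s = d - s by omega, show d - (d - s) = s by omega, mul_comm]
  · rw [if_neg hki, if_neg hki]

lemma schur_B_coeff_zero (γ : ℕ → ℂ) (n : ℕ) : ∀ j, ((schurAB γ n j).2).coeff 0 = 1 := by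
  intro j
  induction j with
  | zero => simp [schurAB]
  | succ j ih => simp [schurAB, coeff_add, mul_coeff_zero, coeff_X_zero, ih]

lemma toepUp_eq (n : ℕ) (c : ℕ → ℂ) : toepUp n c = toepGen n (fun t => c (n - t)) := rfl

lemma toepLowConj_eq (n : ℕ) (c : ℕ → ℂ) :
    toepLowConj n c = toepGen n (fun t => starRingEnd ℂ (c t)) := rfl

lemma prod_entry (n : ℕ) (P : Polynomial ℂ) (hP : P.natDegree ≤ n) (c : ℕ → ℂ)
    (hc : ∀ j, c j = P.coeff j) (i k : Fin n) (hki : (k : ℕ) ≤ (i : ℕ)) :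
    (toepUp n c * toepLowConj n c) i k = (P * tilde n P).coeff (2*n - ((i:ℕ) - (k:ℕ))) := by
  have hin := i.isLt
  rw [toepUp_eq, toepLowConj_eq, toepGen_mul_apply, if_pos hki,
    coeff_mul_tilde n P hP _ (by omega)]
  refine Finset.sum_congr rfl fun s hs => ?_
  simp only [mem_range] at hs
  simp [hc, show n - ((i:ℕ)-(k:ℕ)-s) = n - ((i:ℕ)-(k:ℕ)) + s by omega]

end StmtSixHelpers

/-- with `𝐀, 𝐁, 𝐀̃, 𝐁̃` the lower triangular Toeplitz matrices built from
the coefficients `a_j`, `b_j` of `A_n`, `B_n` as indicated, one has `𝐁·𝐁̃ = 𝐀·𝐀̃`, and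
consequently for all vectors `α, β ∈ ℂⁿ`, `𝐁̃β + 𝐀α = 0` implies `𝐀̃β + 𝐁α = 0`. -/
theorem stmt_6 (n : ℕ) (hn : 1 ≤ n) (γ : ℕ → ℂ)
    (hγ : ∀ j ≤ n, ‖γ j‖ < 1)
    (a b : ℕ → ℂ) (ha : ∀ j, a j = ((schurAB γ n n).1).coeff j)
    (hb : ∀ j, b j = ((schurAB γ n n).2).coeff j) :
    toepUp n b * toepLowConj n b = toepUp n a * toepLowConj n a ∧
    ∀ α β : Fin n → ℂ,
      (toepLowConj n b).mulVec β + (toepUp n a).mulVec α = 0 →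
      (toepLowConj n a).mulVec β + (toepUp n b).mulVec α = 0 := by
  obtain ⟨hdA, hdB, c, hc⟩ := schur_key γ n n
  set A := (schurAB γ n n).1 with hAdef
  set B := (schurAB γ n n).2 with hBdef
  have hcoeff : ∀ m, n < m → (B * tilde n B).coeff m = (A * tilde n A).coeff m := by
    intro m hm
    rw [hc, coeff_add, coeff_C_mul, coeff_X_pow, if_neg (by omega), mul_zero, add_zero]
  have hmat : toepUp n b * toepLowConj n b = toepUp n a * toepLowConj n a := by
    ext i k
    by_cases hki : (k : ℕ) ≤ (i : ℕ)
    · rw [prod_entry n B hdB b hb i k hki, prod_entry n A hdA a ha i k hki]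
      exact hcoeff _ (by have := i.isLt; omega)
    · simp only [toepUp_eq, toepLowConj_eq, toepGen_mul_apply, if_neg hki]
  refine ⟨hmat, fun α β hyp => ?_⟩
  have hb0 : b 0 = 1 := by rw [hb]; exact schur_B_coeff_zero γ n n
  have hdet : (toepLowConj n b).det = 1 := by
    rw [Matrix.det_of_lowerTriangular _ (by
      intro i j hij
      have : (i : ℕ) < (j : ℕ) := hij
      simp only [toepLowConj, Matrix.of_apply, if_neg (show ¬ ((j:ℕ) ≤ (i:ℕ)) by omega)])]
    simp [toepLowConj, hb0]
  have hunit : IsUnit (toepLowConj n b) :=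
    (Matrix.isUnit_iff_isUnit_det _).mpr (by rw [hdet]; exact isUnit_one)
  have hinj : Function.Injective (toepLowConj n b).mulVec :=
    Matrix.mulVec_injective_iff_isUnit.mpr hunit
  apply hinj
  rw [Matrix.mulVec_zero]
  have hβ : (toepLowConj n b).mulVec β = -((toepUp n a).mulVec α) :=
    eq_neg_of_add_eq_zero_left hyp
  have comm1 : toepLowConj n b * toepLowConj n a = toepLowConj n a * toepLowConj n b := by
    rw [toepLowConj_eq, toepLowConj_eq, toepGen_comm]
  have comm2 : toepLowConj n b * toepUp n b = toepUp n b * toepLowConj n b := by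
    rw [toepLowConj_eq, toepUp_eq, toepGen_comm]
  have comm3 : toepLowConj n a * toepUp n a = toepUp n a * toepLowConj n a := by
    rw [toepLowConj_eq, toepUp_eq, toepGen_comm]
  calc (toepLowConj n b).mulVec ((toepLowConj n a).mulVec β + (toepUp n b).mulVec α)
      = (toepLowConj n b * toepLowConj n a).mulVec β
        + (toepLowConj n b * toepUp n b).mulVec α := by
        rw [Matrix.mulVec_add, Matrix.mulVec_mulVec, Matrix.mulVec_mulVec]
    _ = (toepLowConj n a).mulVec ((toepLowConj n b).mulVec β)
        + (toepUp n b * toepLowConj n b).mulVec α := by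
        rw [comm1, comm2, Matrix.mulVec_mulVec]
    _ = -((toepLowConj n a * toepUp n a).mulVec α)
        + (toepUp n a * toepLowConj n a).mulVec α := by
        rw [hβ, Matrix.mulVec_neg, Matrix.mulVec_mulVec, hmat]
    _ = 0 := by rw [comm3, neg_add_cancel]
end

section
/- One has max(deg F, deg G) − 1 ≤ max(deg N_1, deg D_1) ≤ max(deg F, deg G), i.e. the McMillan degree of f = F/G exceeds the McMillan degree of f_1 = N_1/D_1 by at most one and is at least that of f_1. -/
open Polynomial

/-- with `F = z·N₁ + c₀·D₁` and `G = z·conj(c₀)·N₁ + D₁` built from a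
coprime pair `(N₁, D₁)` with `D₁(0) ≠ 0` and `|c₀| < 1`, one has
`max(deg F, deg G) - 1 ≤ max(deg N₁, deg D₁) ≤ max(deg F, deg G)`:
the McMillan degree of `f = F/G` exceeds that of `f₁ = N₁/D₁` by at most one and is
at least that of `f₁`. -/
theorem stmt_8 (c₀ : ℂ) (hc₀ : ‖c₀‖ < 1)
    (N₁ D₁ : Polynomial ℂ) (hcop : IsCoprime N₁ D₁) (hD₁ : D₁.eval 0 ≠ 0)
    (F G : Polynomial ℂ)
    (hF : F = X * N₁ + C c₀ * D₁)
    (hG : G = X * C (starRingEnd ℂ c₀) * N₁ + D₁) :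
    max F.natDegree G.natDegree - 1 ≤ max N₁.natDegree D₁.natDegree ∧
    max N₁.natDegree D₁.natDegree ≤ max F.natDegree G.natDegree := by
  have hk : (1 - c₀ * (starRingEnd ℂ c₀)) ≠ 0 := by
    intro h
    have h1 : c₀ * (starRingEnd ℂ c₀) = 1 := by linear_combination -h
    have h2 := congrArg (‖·‖) h1
    simp [map_mul, Complex.norm_conj] at h2
    nlinarith [norm_nonneg c₀]
  set k := 1 - c₀ * starRingEnd ℂ c₀ with hkdef
  have h1 : C k * (X * N₁) = F - C c₀ * G := by
    subst hF hG
    simp only [hkdef, map_sub, map_mul, map_one]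
    ring
  have h2 : C k * D₁ = G - C (starRingEnd ℂ c₀) * F := by
    subst hF hG
    simp only [hkdef, map_sub, map_mul, map_one]
    ring
  have ha : F.natDegree ≤ max N₁.natDegree D₁.natDegree + 1 := by
    rw [hF]
    refine (natDegree_add_le _ _).trans (max_le ?_ ?_)
    · refine natDegree_mul_le.trans ?_
      rw [natDegree_X]
      have := le_max_left N₁.natDegree D₁.natDegree
      omega
    · refine (natDegree_C_mul_le _ _).trans ?_
      have := le_max_right N₁.natDegree D₁.natDegree
      omega
  have hb : G.natDegree ≤ max N₁.natDegree D₁.natDegree + 1 := by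
    rw [hG]
    refine (natDegree_add_le _ _).trans (max_le ?_ ?_)
    · refine natDegree_mul_le.trans ?_
      have : (X * C (starRingEnd ℂ c₀)).natDegree ≤ 1 := by
        refine natDegree_mul_le.trans ?_
        simp [natDegree_X]
      have h3 := le_max_left N₁.natDegree D₁.natDegree
      omega
    · have := le_max_right N₁.natDegree D₁.natDegree
      omega
  have hc : N₁.natDegree ≤ max F.natDegree G.natDegree := by
    have hle : N₁.natDegree ≤ (X * N₁).natDegree := by
      rcases eq_or_ne N₁ 0 with h | h
      · simp [h]
      · rw [natDegree_mul X_ne_zero h, natDegree_X]; omega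
    refine hle.trans ?_
    rw [← natDegree_C_mul hk, h1]
    refine (natDegree_sub_le _ _).trans (max_le ?_ ?_)
    · exact le_max_left _ _
    · exact (natDegree_C_mul_le _ _).trans (le_max_right _ _)
  have hd : D₁.natDegree ≤ max F.natDegree G.natDegree := by
    rw [← natDegree_C_mul hk, h2]
    refine (natDegree_sub_le _ _).trans (max_le ?_ ?_)
    · exact le_max_right _ _
    · exact (natDegree_C_mul_le _ _).trans (le_max_left _ _)
  exact ⟨by omega, by omega⟩
end

section
/- The equality max(deg F, deg G) = max(deg N_1, deg D_1) holds if and only if deg N_1 < deg D_1 in the sense of strict degree comparison with deg 0 = −∞ (i.e. if and only if f_1 = N_1/D_1 vanishes at infinity). -/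
open Polynomial

/-- with `F = z·N₁ + c₀·D₁` and `G = z·conj(c₀)·N₁ + D₁` built from a
coprime pair `(N₁, D₁)` with `D₁(0) ≠ 0` and `|c₀| < 1`, the equality
`max(deg F, deg G) = max(deg N₁, deg D₁)` (natural-number degrees, `deg 0 = 0`) holds
if and only if `deg N₁ < deg D₁` in the strict sense (`deg 0 = -∞`), i.e. iff
`f₁ = N₁/D₁` vanishes at infinity. -/
theorem stmt_9 (c₀ : ℂ) (hc₀ : ‖c₀‖ < 1)
    (N₁ D₁ : Polynomial ℂ) (hcop : IsCoprime N₁ D₁) (hD₁ : D₁.eval 0 ≠ 0)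
    (F G : Polynomial ℂ)
    (hF : F = X * N₁ + C c₀ * D₁)
    (hG : G = X * C (starRingEnd ℂ c₀) * N₁ + D₁) :
    max F.natDegree G.natDegree = max N₁.natDegree D₁.natDegree ↔
      N₁.degree < D₁.degree := by
  have hD0 : D₁ ≠ 0 := fun h => hD₁ (by simp [h])
  rw [show X * C (starRingEnd ℂ c₀) * N₁ = C (starRingEnd ℂ c₀) * (X * N₁) by ring] at hG
  by_cases hN : N₁ = 0
  · subst hN
    have h1 : F = C c₀ * D₁ := by rw [hF]; ring
    have h2 : G = D₁ := by rw [hG]; ring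
    have hFd : F.natDegree ≤ D₁.natDegree := h1 ▸ natDegree_C_mul_le _ _
    have hmax : max F.natDegree G.natDegree = D₁.natDegree := by
      rw [h2]; omega
    have hbot : (⊥ : WithBot ℕ) < D₁.degree :=
      bot_lt_iff_ne_bot.mpr (fun h => hD0 (degree_eq_bot.mp h))
    simp [hmax, hbot]
  · have hdN : N₁.degree = (N₁.natDegree : WithBot ℕ) := degree_eq_natDegree hN
    have hdD : D₁.degree = (D₁.natDegree : WithBot ℕ) := degree_eq_natDegree hD0
    have hiff : N₁.degree < D₁.degree ↔ N₁.natDegree < D₁.natDegree := by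
      rw [hdN, hdD, Nat.cast_lt]
    rw [hiff]
    have hXN : (X * N₁).natDegree ≤ 1 + N₁.natDegree :=
      natDegree_mul_le.trans (by simp)
    by_cases hlt : N₁.natDegree < D₁.natDegree
    · simp only [hlt, iff_true]
      obtain ⟨e, he⟩ : ∃ e, D₁.natDegree = e + 1 := ⟨D₁.natDegree - 1, by omega⟩
      have hFle : F.natDegree ≤ D₁.natDegree := by
        rw [hF]
        refine (natDegree_add_le _ _).trans ?_
        have h2 := natDegree_C_mul_le c₀ D₁
        omega
      have hGle : G.natDegree ≤ D₁.natDegree := by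
        rw [hG]
        refine (natDegree_add_le _ _).trans ?_
        have h2 := natDegree_C_mul_le (starRingEnd ℂ c₀) (X * N₁)
        omega
      have hb : D₁.coeff (e + 1) ≠ 0 := by
        rw [← he]; exact fun h => hD0 (leadingCoeff_eq_zero.mp h)
      have key : F.coeff (e + 1) ≠ 0 ∨ G.coeff (e + 1) ≠ 0 := by
        by_contra h
        push_neg at h
        obtain ⟨h1, h2⟩ := h
        rw [hF] at h1
        rw [hG] at h2
        simp only [coeff_add, coeff_C_mul, coeff_X_mul] at h1 h2
        have hns : (starRingEnd ℂ c₀) * c₀ = (Complex.normSq c₀ : ℂ) := by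
          rw [mul_comm, Complex.mul_conj]
        have hns1 : Complex.normSq c₀ < 1 := by
          have := Complex.sq_norm c₀
          nlinarith [norm_nonneg c₀]
        have hz : (1 - (starRingEnd ℂ c₀) * c₀) * D₁.coeff (e + 1) = 0 := by
          linear_combination h2 - (starRingEnd ℂ c₀) * h1
        have hnz : (1 : ℂ) - (starRingEnd ℂ c₀) * c₀ ≠ 0 := by
          rw [hns]
          intro h
          have : (Complex.normSq c₀ : ℂ) = 1 := by linear_combination -h
          have := Complex.ofReal_injective (by exact_mod_cast this)
          linarith
        exact hb (by
          rcases mul_eq_zero.mp hz with h' | h'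
          · exact absurd h' hnz
          · exact h')
      have hge : e + 1 ≤ max F.natDegree G.natDegree := by
        rcases key with h | h
        · exact le_trans (le_natDegree_of_ne_zero h) (le_max_left _ _)
        · exact le_trans (le_natDegree_of_ne_zero h) (le_max_right _ _)
      omega
    · simp only [hlt, iff_false]
      have hXNd : (X * N₁).degree = ((N₁.natDegree + 1 : ℕ) : WithBot ℕ) := by
        rw [degree_mul, degree_X, hdN]
        push_cast
        ring
      have hCD : (C c₀ * D₁).degree < (X * N₁).degree := by
        have hle : (C c₀ * D₁).degree ≤ D₁.degree := by
          calc (C c₀ * D₁).degree ≤ (C c₀).degree + D₁.degree := degree_mul_le _ _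
            _ ≤ 0 + D₁.degree := add_le_add degree_C_le le_rfl
            _ = D₁.degree := zero_add _
        refine lt_of_le_of_lt hle ?_
        rw [hdD, hXNd, Nat.cast_lt]
        omega
      have hFdeg : F.degree = ((N₁.natDegree + 1 : ℕ) : WithBot ℕ) := by
        rw [hF, degree_add_eq_left_of_degree_lt hCD, hXNd]
      have hFnat : F.natDegree = N₁.natDegree + 1 := natDegree_eq_of_degree_eq_some hFdeg
      have h1 : F.natDegree ≤ max F.natDegree G.natDegree := le_max_left _ _
      omega
end

section
/- The following are equivalent: (i) max(deg F, deg G) = max(deg N_1, deg D_1) + 1; (ii) deg D_1 ≤ deg N_1 in the sense of strict-degree comparison with deg 0 = −∞ (i.e. f_1 = N_1/D_1 does not vanish at infinity); (iii) f = F/G takes the value 1/conj(c_0) at infinity, meaning: either c_0 = 0 and deg G < deg F (with deg 0 = −∞), or deg F = deg G and conj(c_0)·(leading coefficient of F) = (leading coefficient of G). -/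
open Polynomial

/-- with `F = z·N₁ + c₀·D₁` and `G = z·conj(c₀)·N₁ + D₁` built from a
coprime pair `(N₁, D₁)` with `D₁(0) ≠ 0` and `|c₀| < 1`, the following are equivalent:
(i) `max(deg F, deg G) = max(deg N₁, deg D₁) + 1` (natural-number degrees);
(ii) `deg D₁ ≤ deg N₁` (strict-degree comparison, `deg 0 = -∞`), i.e. `f₁` does not
vanish at infinity;
(iii) `f = F/G` takes the value `1/conj(c₀)` at infinity: either `c₀ = 0` and
`deg G < deg F`, or `deg F = deg G` and `conj(c₀)·lc(F) = lc(G)`. -/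
theorem stmt_10 (c₀ : ℂ) (hc₀ : ‖c₀‖ < 1)
    (N₁ D₁ : Polynomial ℂ) (hcop : IsCoprime N₁ D₁) (hD₁ : D₁.eval 0 ≠ 0)
    (F G : Polynomial ℂ)
    (hF : F = X * N₁ + C c₀ * D₁)
    (hG : G = X * C (starRingEnd ℂ c₀) * N₁ + D₁) :
    (max F.natDegree G.natDegree = max N₁.natDegree D₁.natDegree + 1 ↔
      D₁.degree ≤ N₁.degree) ∧
    (max F.natDegree G.natDegree = max N₁.natDegree D₁.natDegree + 1 ↔
      ((c₀ = 0 ∧ G.degree < F.degree) ∨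
        (F.degree = G.degree ∧ starRingEnd ℂ c₀ * F.leadingCoeff = G.leadingCoeff))) := by
  have hD0 : D₁ ≠ 0 := fun h => hD₁ (by simp [h])
  have h1 : (1 : ℂ) - c₀ * starRingEnd ℂ c₀ ≠ 0 := by
    have h2 : Complex.normSq c₀ < 1 := by
      rw [← Complex.sq_norm]; nlinarith [norm_nonneg c₀]
    rw [Complex.mul_conj, sub_ne_zero]
    exact_mod_cast h2.ne'
  have hCle : ∀ (a : ℂ) (p : Polynomial ℂ), (C a * p).degree ≤ p.degree := by
    intro a p
    by_cases h : a = 0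
    · simp [h]
    · rw [degree_C_mul h]
  have hid : G - C (starRingEnd ℂ c₀) * F = C (1 - c₀ * starRingEnd ℂ c₀) * D₁ := by
    rw [hF, hG]; simp only [map_sub, map_mul, map_one]; ring
  suffices h : (max F.natDegree G.natDegree = max N₁.natDegree D₁.natDegree + 1 ↔
      D₁.degree ≤ N₁.degree) ∧
      (((c₀ = 0 ∧ G.degree < F.degree) ∨
        (F.degree = G.degree ∧ starRingEnd ℂ c₀ * F.leadingCoeff = G.leadingCoeff)) ↔
      D₁.degree ≤ N₁.degree) by
    exact ⟨h.1, h.1.trans h.2.symm⟩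
  by_cases hle : D₁.degree ≤ N₁.degree
  · have hN0 : N₁ ≠ 0 := by
      intro h
      rw [h, degree_zero, le_bot_iff, degree_eq_bot] at hle
      exact hD0 hle
    have hnd : D₁.natDegree ≤ N₁.natDegree := natDegree_le_natDegree hle
    have hdXN : (X * N₁).degree = ((N₁.natDegree + 1 : ℕ) : WithBot ℕ) := by
      rw [degree_mul, degree_X, degree_eq_natDegree hN0]
      push_cast; ring
    have hltF : (C c₀ * D₁).degree < (X * N₁).degree := by
      refine lt_of_le_of_lt (le_trans (hCle _ _) hle) ?_
      rw [hdXN, degree_eq_natDegree hN0]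
      exact_mod_cast Nat.lt_succ_self _
    have hFd : F.degree = ((N₁.natDegree + 1 : ℕ) : WithBot ℕ) := by
      rw [hF, add_comm, degree_add_eq_right_of_degree_lt hltF, hdXN]
    have hFn : F.natDegree = N₁.natDegree + 1 := natDegree_eq_of_degree_eq_some hFd
    have hFlc : F.leadingCoeff = N₁.leadingCoeff := by
      rw [hF, add_comm, leadingCoeff_add_of_degree_lt hltF, leadingCoeff_mul,
        leadingCoeff_X, one_mul]
    by_cases hc : c₀ = 0
    · have hGD : G = D₁ := by rw [hG, hc]; simp
      constructor
      · rw [hGD]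
        constructor
        · intro _; exact hle
        · intro _
          rw [hFn, max_eq_left hnd, max_eq_left (le_trans hnd (Nat.le_succ _))]
      · constructor
        · intro _; exact hle
        · intro _
          left
          refine ⟨hc, ?_⟩
          rw [hGD, hFd, degree_eq_natDegree hD0]
          exact_mod_cast Nat.lt_succ_of_le hnd
    · have hcb : starRingEnd ℂ c₀ ≠ 0 := fun h => hc (by simpa using congrArg (starRingEnd ℂ) h)
      have hXC : X * C (starRingEnd ℂ c₀) * N₁ = C (starRingEnd ℂ c₀) * (X * N₁) := by ring
      have hdXG : (X * C (starRingEnd ℂ c₀) * N₁).degree = ((N₁.natDegree + 1 : ℕ) : WithBot ℕ) := by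
        rw [hXC, degree_C_mul hcb, hdXN]
      have hltG : D₁.degree < (X * C (starRingEnd ℂ c₀) * N₁).degree := by
        refine lt_of_le_of_lt hle ?_
        rw [hdXG, degree_eq_natDegree hN0]
        exact_mod_cast Nat.lt_succ_self _
      have hGd : G.degree = ((N₁.natDegree + 1 : ℕ) : WithBot ℕ) := by
        rw [hG, degree_add_eq_left_of_degree_lt hltG, hdXG]
      have hGn : G.natDegree = N₁.natDegree + 1 := natDegree_eq_of_degree_eq_some hGd
      have hGlc : G.leadingCoeff = starRingEnd ℂ c₀ * N₁.leadingCoeff := by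
        rw [hG, leadingCoeff_add_of_degree_lt' hltG, hXC, leadingCoeff_mul,
          leadingCoeff_C, leadingCoeff_mul, leadingCoeff_X, one_mul]
      constructor
      · constructor
        · intro _; exact hle
        · intro _
          rw [hFn, hGn, max_self, max_eq_left hnd]
      · constructor
        · intro _; exact hle
        · intro _
          right
          exact ⟨hFd.trans hGd.symm, by rw [hFlc, hGlc]⟩
  · -- N₁.degree < D₁.degree
    have hlt : N₁.degree < D₁.degree := lt_of_not_ge hle
    have hXN : (X * N₁).degree ≤ D₁.degree := by
      rw [degree_mul, degree_X, add_comm]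
      exact Nat.WithBot.add_one_le_of_lt hlt
    have hFle : F.degree ≤ D₁.degree := by
      rw [hF]
      exact le_trans (degree_add_le _ _) (max_le hXN (hCle _ _))
    have hGle : G.degree ≤ D₁.degree := by
      rw [hG]
      refine le_trans (degree_add_le _ _) (max_le ?_ le_rfl)
      calc (X * C (starRingEnd ℂ c₀) * N₁).degree
          = (C (starRingEnd ℂ c₀) * (X * N₁)).degree := by ring_nf
        _ ≤ (X * N₁).degree := hCle _ _
        _ ≤ D₁.degree := hXN
    have hnd : N₁.natDegree ≤ D₁.natDegree := natDegree_le_natDegree hlt.le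
    have hFnle : F.natDegree ≤ D₁.natDegree := natDegree_le_natDegree hFle
    have hGnle : G.natDegree ≤ D₁.natDegree := natDegree_le_natDegree hGle
    have hi : ¬ (max F.natDegree G.natDegree = max N₁.natDegree D₁.natDegree + 1) := by
      rw [max_eq_right hnd]
      omega
    refine ⟨⟨fun h => absurd h hi, fun h => absurd h hle⟩,
      ⟨fun h => ?_, fun h => absurd h hle⟩⟩
    exfalso
    rcases h with ⟨hc, hGF⟩ | ⟨hdeg, hlc⟩
    · -- c₀ = 0 : G = D₁, deg G < deg F contradicts hFle
      have hGD : G = D₁ := by rw [hG, hc]; simp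
      rw [hGD] at hGF
      exact lt_irrefl _ (lt_of_lt_of_le hGF hFle)
    · by_cases hc : c₀ = 0
      · -- conj c₀ = 0, so lc G = 0, but G = D₁ ≠ 0
        rw [hc] at hlc
        simp only [map_zero, zero_mul] at hlc
        have hGD : G = D₁ := by rw [hG, hc]; simp
        exact hD0 (leadingCoeff_eq_zero.mp (by rw [hGD] at hlc; exact hlc.symm))
      · have hcb : starRingEnd ℂ c₀ ≠ 0 := fun h => hc (by simpa using congrArg (starRingEnd ℂ) h)
        have hG0 : G ≠ 0 := by
          intro h0
          have hF0 : F = 0 := by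
            rw [h0, degree_zero] at hdeg
            exact degree_eq_bot.mp hdeg
          rw [h0, hF0] at hid
          simp only [mul_zero, sub_zero, zero_sub] at hid
          exact hD0 ((mul_eq_zero.mp hid.symm).resolve_left (fun h => h1 (C_eq_zero.mp h)))
        have hsub : (G - C (starRingEnd ℂ c₀) * F).degree < G.degree := by
          refine degree_sub_lt ?_ hG0 ?_
          · rw [degree_C_mul hcb, hdeg]
          · rw [leadingCoeff_mul, leadingCoeff_C, hlc]
        rw [hid, degree_C_mul h1] at hsub
        exact absurd (lt_of_lt_of_le hsub hGle) (lt_irrefl _)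
end

section
/- The polynomials F = z·N_1 + c_0·D_1 and G = z·conj(c_0)·N_1 + D_1 have no common zero in ℂ; equivalently, F and G are coprime in ℂ[z], so that f = F/G is a coprime representation and the McMillan degree of f equals max(deg F, deg G). -/
open Polynomial

/-- with `F = z·N₁ + c₀·D₁` and `G = z·conj(c₀)·N₁ + D₁` built from a
coprime pair `(N₁, D₁)` with `D₁(0) ≠ 0` and `|c₀| < 1`, the polynomials `F` and `G`
have no common zero in `ℂ`; equivalently they are coprime in `ℂ[z]`, so `f = F/G` is a
coprime representation and the McMillan degree of `f` equals `max(deg F, deg G)`. -/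
theorem stmt_11 (c₀ : ℂ) (hc₀ : ‖c₀‖ < 1)
    (N₁ D₁ : Polynomial ℂ) (hcop : IsCoprime N₁ D₁) (hD₁ : D₁.eval 0 ≠ 0)
    (F G : Polynomial ℂ)
    (hF : F = X * N₁ + C c₀ * D₁)
    (hG : G = X * C (starRingEnd ℂ c₀) * N₁ + D₁) :
    (∀ z : ℂ, ¬(F.eval z = 0 ∧ G.eval z = 0)) ∧ IsCoprime F G := by
  -- k = 1 - |c₀|² ≠ 0
  set c₁ : ℂ := starRingEnd ℂ c₀ with hc₁
  have hk : (1 : ℂ) - c₀ * c₁ ≠ 0 := by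
    have h1 : c₀ * c₁ = (Complex.normSq c₀ : ℂ) := Complex.mul_conj c₀
    have h2 : Complex.normSq c₀ < 1 := by
      have := Complex.sq_norm c₀
      nlinarith [norm_nonneg c₀]
    intro h
    rw [h1] at h
    have : (Complex.normSq c₀ : ℂ) = 1 := by linear_combination -h
    have := Complex.ofReal_injective (by exact_mod_cast this : ((Complex.normSq c₀ : ℝ) : ℂ) = ((1:ℝ) : ℂ))
    linarith
  have hXD : IsCoprime (X : Polynomial ℂ) D₁ := by
    refine (Polynomial.irreducible_X.coprime_iff_not_dvd).mpr ?_
    rw [Polynomial.X_dvd_iff]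
    rwa [← Polynomial.coeff_zero_eq_eval_zero] at hD₁
  obtain ⟨a, b, hab⟩ := hXD.mul_left hcop
  set k : ℂ := (1 : ℂ) - c₀ * c₁ with hkdef
  have hCk : (C k⁻¹ : Polynomial ℂ) * C k = 1 := by
    rw [← C_mul, inv_mul_cancel₀ hk, C_1]
  have hCk2 : (C k : Polynomial ℂ) = 1 - C c₀ * C c₁ := by
    rw [hkdef]; push_cast [map_sub, map_mul, map_one]; ring
  have hcopFG : IsCoprime F G := by
    refine ⟨C k⁻¹ * (a - C c₁ * b), C k⁻¹ * (b - C c₀ * a), ?_⟩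
    subst hF hG
    linear_combination hab + (a * (X * N₁) + b * D₁) * hCk
      - (C k⁻¹ * (a * (X * N₁) + b * D₁)) * hCk2
  refine ⟨?_, hcopFG⟩
  intro z ⟨hFz, hGz⟩
  obtain ⟨u, v, huv⟩ := hcopFG
  have := congrArg (Polynomial.eval z) huv
  simp [hFz, hGz] at this
end

section
/- If for some index i with 0 ≤ i ≤ n one has d_i = d_{i+1} + 1, then d_j = d_{j+1} + 1 holds for every j with 0 ≤ j ≤ i; that is, once the McMillan degree drops by one at some step of the backward Schur algorithm, it drops by one at every earlier step. -/
open Polynomial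

/-- Lemma 2.3, first part: in the backward Schur algorithm
`N_j = z·N_{j+1} + γ_j·D_{j+1}`, `D_j = z·conj(γ_j)·N_{j+1} + D_{j+1}` started from a
coprime pair `(N_{n+1}, D_{n+1})` with `D_{n+1}(0) ≠ 0`, if the McMillan degree
`d_j = max(deg N_j, deg D_j)` satisfies `d_i = d_{i+1} + 1` for some `i ≤ n`, then
`d_j = d_{j+1} + 1` for every `j ≤ i`. -/
theorem stmt_12 (n : ℕ) (γ : ℕ → ℂ) (hγ : ∀ j ≤ n, ‖γ j‖ < 1)
    (N D : ℕ → Polynomial ℂ)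
    (hcop : IsCoprime (N (n + 1)) (D (n + 1))) (hD0 : (D (n + 1)).eval 0 ≠ 0)
    (hN : ∀ j ≤ n, N j = X * N (j + 1) + C (γ j) * D (j + 1))
    (hD : ∀ j ≤ n, D j = X * C (starRingEnd ℂ (γ j)) * N (j + 1) + D (j + 1))
    (d : ℕ → ℕ) (hd : ∀ j, d j = max (N j).natDegree (D j).natDegree) :
    ∀ i ≤ n, d i = d (i + 1) + 1 → ∀ j ≤ i, d j = d (j + 1) + 1 := by
  -- Key step: if the degree dominance invariant holds at `j+1`, the degree drops at step `j`
  -- and the invariant holds at `j`.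
  have L2 : ∀ j ≤ n, N (j+1) ≠ 0 → (D (j+1)).natDegree ≤ (N (j+1)).natDegree →
      d j = d (j+1) + 1 ∧ N j ≠ 0 ∧ (D j).natDegree ≤ (N j).natDegree := by
    intro j hj hNne hge
    have hNj := hN j hj
    have hDj := hD j hj
    set dN := (N (j+1)).natDegree with hdN
    have hXN : (X * N (j+1)).natDegree = dN + 1 := natDegree_X_mul hNne
    have hCD : (C (γ j) * D (j+1)).natDegree < (X * N (j+1)).natDegree := by
      rw [hXN]
      exact Nat.lt_succ_of_le ((natDegree_C_mul_le _ _).trans hge)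
    have hNjdeg : (N j).natDegree = dN + 1 := by
      rw [hNj, natDegree_add_eq_left_of_natDegree_lt hCD, hXN]
    have hNjne : N j ≠ 0 := by
      intro h
      rw [h, natDegree_zero] at hNjdeg
      exact Nat.succ_ne_zero _ hNjdeg.symm
    have hDjdeg : (D j).natDegree ≤ dN + 1 := by
      rw [hDj]
      refine (natDegree_add_le _ _).trans (max_le ?_ ?_)
      · calc (X * C (starRingEnd ℂ (γ j)) * N (j+1)).natDegree
            ≤ (X * C (starRingEnd ℂ (γ j))).natDegree + dN := natDegree_mul_le
          _ ≤ 1 + dN := by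
              have : (X * C (starRingEnd ℂ (γ j))).natDegree ≤ 1 := by
                refine natDegree_mul_le.trans ?_
                simp
              omega
          _ = dN + 1 := by omega
      · exact hge.trans (Nat.le_succ _)
    have hle2 : (D j).natDegree ≤ (N j).natDegree := hDjdeg.trans_eq hNjdeg.symm
    refine ⟨?_, hNjne, hle2⟩
    rw [hd j, hd (j+1), max_eq_left hle2, max_eq_left hge, hNjdeg]
  -- Converse: a degree drop at step `j` forces the invariant at `j+1`.
  have L1 : ∀ j ≤ n, d j = d (j+1) + 1 →
      N (j+1) ≠ 0 ∧ (D (j+1)).natDegree ≤ (N (j+1)).natDegree := by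
    intro j hj hdrop
    by_contra hcon
    push_neg at hcon
    have hle : d j ≤ d (j+1) := by
      by_cases hz : N (j+1) = 0
      · have hNj := hN j hj
        have hDj := hD j hj
        rw [hz, mul_zero, zero_add] at hNj
        rw [hz, mul_zero, zero_add] at hDj
        rw [hd j, hd (j+1), hNj, hDj]
        exact max_le ((natDegree_C_mul_le _ _).trans (le_max_right _ _)) (le_max_right _ _)
      · have hlt : (N (j+1)).natDegree < (D (j+1)).natDegree := hcon hz
        have hb : ∀ p : Polynomial ℂ, p.natDegree ≤ 1 →
            (p * N (j+1) + D (j+1)).natDegree ≤ (D (j+1)).natDegree := by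
          intro p hp
          refine (natDegree_add_le _ _).trans (max_le ?_ le_rfl)
          calc (p * N (j+1)).natDegree ≤ p.natDegree + (N (j+1)).natDegree :=
                natDegree_mul_le
            _ ≤ 1 + (N (j+1)).natDegree := by omega
            _ ≤ (D (j+1)).natDegree := by omega
        have h1 : (N j).natDegree ≤ (D (j+1)).natDegree := by
          rw [hN j hj]
          have : (X * N (j+1) + C (γ j) * D (j+1)).natDegree
              ≤ max (X * N (j+1)).natDegree (C (γ j) * D (j+1)).natDegree :=
            natDegree_add_le _ _
          refine this.trans (max_le ?_ (natDegree_C_mul_le _ _))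
          calc (X * N (j+1)).natDegree ≤ (X : Polynomial ℂ).natDegree + (N (j+1)).natDegree :=
                natDegree_mul_le
            _ = 1 + (N (j+1)).natDegree := by rw [natDegree_X]
            _ ≤ (D (j+1)).natDegree := by omega
        have h2 : (D j).natDegree ≤ (D (j+1)).natDegree := by
          rw [hD j hj]
          refine hb _ ?_
          refine natDegree_mul_le.trans ?_
          simp
        rw [hd j, hd (j+1)]
        exact max_le (h1.trans (le_max_right _ _)) (h2.trans (le_max_right _ _))
    omega
  intro i hi hdrop
  -- downward induction: the invariant holds at `j+1` for every `j ≤ i`.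
  have key : ∀ k, ∀ j ≤ i, i - j = k →
      N (j+1) ≠ 0 ∧ (D (j+1)).natDegree ≤ (N (j+1)).natDegree := by
    intro k
    induction k with
    | zero =>
      intro j hji hk
      have : j = i := by omega
      subst this
      exact L1 j (le_trans hji hi) hdrop
    | succ k ih =>
      intro j hji hk
      have h1 : j + 1 ≤ i := by omega
      have h2 : i - (j + 1) = k := by omega
      obtain ⟨hne, hge⟩ := ih (j+1) h1 h2
      exact ⟨(L2 (j+1) (le_trans h1 hi) hne hge).2.1, (L2 (j+1) (le_trans h1 hi) hne hge).2.2⟩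
  intro j hji
  obtain ⟨hne, hge⟩ := key (i - j) j hji rfl
  exact (L2 j (le_trans hji hi) hne hge).1
end

section
/- If for some index i with 0 ≤ i ≤ n+1 one has deg N_i < deg D_i (strict degree comparison with deg 0 = −∞, i.e. f_i vanishes at infinity), then for every j with i ≤ j ≤ n+1 one has deg N_j < deg D_j and d_j = d_i; that is, the condition f(∞) = 0 propagates forward along the backward Schur algorithm with constant McMillan degree. -/
open Polynomial

/-- Lemma 2.3, second part: in the backward Schur algorithm
`N_j = z·N_{j+1} + γ_j·D_{j+1}`, `D_j = z·conj(γ_j)·N_{j+1} + D_{j+1}` started from a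
coprime pair `(N_{n+1}, D_{n+1})` with `D_{n+1}(0) ≠ 0`, if `deg N_i < deg D_i`
(strict degrees, `deg 0 = -∞`, i.e. `f_i(∞) = 0`) for some `i ≤ n+1`, then for every
`j` with `i ≤ j ≤ n+1` one has `deg N_j < deg D_j` and
`d_j = d_i` where `d_j = max(deg N_j, deg D_j)` (natural-number degrees). -/
theorem stmt_13 (n : ℕ) (γ : ℕ → ℂ) (hγ : ∀ j ≤ n, ‖γ j‖ < 1)
    (N D : ℕ → Polynomial ℂ)
    (hcop : IsCoprime (N (n + 1)) (D (n + 1))) (hD0 : (D (n + 1)).eval 0 ≠ 0)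
    (hN : ∀ j ≤ n, N j = X * N (j + 1) + C (γ j) * D (j + 1))
    (hD : ∀ j ≤ n, D j = X * C (starRingEnd ℂ (γ j)) * N (j + 1) + D (j + 1))
    (d : ℕ → ℕ) (hd : ∀ j, d j = max (N j).natDegree (D j).natDegree) :
    ∀ i ≤ n + 1, (N i).degree < (D i).degree →
      ∀ j, i ≤ j → j ≤ n + 1 → (N j).degree < (D j).degree ∧ d j = d i := by
  -- main step lemma
  have key : ∀ j ≤ n, (N j).degree < (D j).degree →
      (N (j+1)).degree < (D (j+1)).degree ∧ (D (j+1)).degree = (D j).degree := by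
    intro j hj hlt
    set g := γ j with hg
    have hc : (1 : ℂ) - g * (starRingEnd ℂ g) ≠ 0 := by
      intro h
      have h1 : g * (starRingEnd ℂ g) = 1 := by linear_combination -h
      have h2 : ‖g * (starRingEnd ℂ g)‖ = ‖g‖ ^ 2 := by
        rw [norm_mul, Complex.norm_conj]; ring
      have h3 := hγ j hj
      rw [h1, norm_one] at h2
      nlinarith [norm_nonneg g]
    -- inverted recursions
    have e1 : C ((1 : ℂ) - g * (starRingEnd ℂ g)) * D (j+1)
        = D j - C (starRingEnd ℂ g) * N j := by
      rw [hN j hj, hD j hj]; push_cast [map_sub, map_mul, map_one]; ring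
    have e2 : C ((1 : ℂ) - g * (starRingEnd ℂ g)) * (N (j+1) * X)
        = N j - C g * D j := by
      rw [hN j hj, hD j hj]; push_cast [map_sub, map_mul, map_one]; ring
    have hDj : D j ≠ 0 := by
      intro h; rw [h, degree_zero] at hlt; exact (not_lt_bot hlt)
    have hCNlt : (C (starRingEnd ℂ g) * N j).degree < (D j).degree :=
      lt_of_le_of_lt (by
        calc (C (starRingEnd ℂ g) * N j).degree ≤ (C (starRingEnd ℂ g)).degree + (N j).degree :=
              degree_mul_le _ _
          _ ≤ 0 + (N j).degree := add_le_add degree_C_le le_rfl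
          _ = (N j).degree := by rw [zero_add]) hlt
    have hDeq : (D (j+1)).degree = (D j).degree := by
      have := degree_sub_eq_left_of_degree_lt hCNlt
      rw [← e1, degree_C_mul hc] at this
      exact this
    have hXle : (N (j+1) * X).degree ≤ (D j).degree := by
      have h := degree_sub_le (N j) (C g * D j)
      rw [← e2, degree_C_mul hc] at h
      refine h.trans (max_le hlt.le ?_)
      calc (C g * D j).degree ≤ (C g).degree + (D j).degree := degree_mul_le _ _
        _ ≤ 0 + (D j).degree := add_le_add degree_C_le le_rfl
        _ = (D j).degree := by rw [zero_add]
    have hNlt : (N (j+1)).degree < (D (j+1)).degree := by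
      rcases eq_or_ne (N (j+1)) 0 with h0 | h0
      · rw [h0, degree_zero, hDeq]
        exact bot_lt_iff_ne_bot.mpr (by simpa [degree_eq_bot] using hDj)
      · calc (N (j+1)).degree < (N (j+1) * X).degree := degree_lt_degree_mul_X h0
          _ ≤ (D j).degree := hXle
          _ = (D (j+1)).degree := hDeq.symm
    exact ⟨hNlt, hDeq⟩
  intro i hi hlt j hij hjn
  induction j, hij using Nat.le_induction with
  | base => exact ⟨hlt, rfl⟩
  | succ k hk ih =>
    have hkn : k ≤ n := Nat.lt_succ_iff.mp hjn
    have ihh := ih (hkn.trans (Nat.le_succ n))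
    obtain ⟨hlk, hdk⟩ := ihh
    obtain ⟨hlt', hDeq⟩ := key k hkn hlk
    refine ⟨hlt', ?_⟩
    have hDk : D k ≠ 0 := by
      intro h; rw [h, degree_zero] at hlk; exact (not_lt_bot hlk)
    have hDk1 : D (k+1) ≠ 0 := by
      intro h; rw [h, degree_zero, eq_comm, degree_eq_bot] at hDeq; exact hDk hDeq
    have h1 : (N (k+1)).natDegree ≤ (D (k+1)).natDegree :=
      natDegree_le_natDegree hlt'.le
    have h2 : (N k).natDegree ≤ (D k).natDegree := natDegree_le_natDegree hlk.le
    have h3 : (D (k+1)).natDegree = (D k).natDegree := natDegree_eq_of_degree_eq hDeq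
    rw [← hdk, hd (k+1), hd k, max_eq_right h1, max_eq_right h2, h3]
end

section
/- If d_0 ≤ n, then d_{n+1} ≤ n and deg N_{n+1} < deg D_{n+1} (strict degree comparison with deg 0 = −∞); that is, if the function f = f_0 obtained from the parameter E = f_{n+1} by n+1 steps of the backward Schur algorithm has McMillan degree at most n, then the parameter E has McMillan degree at most n and vanishes at infinity. -/
open Polynomial

private lemma schur_step_le (γj : ℂ) (hγj : ‖γj‖ < 1)
    (Nj Dj N' D' : Polynomial ℂ)
    (hN : Nj = X * N' + C γj * D') (hD : Dj = X * C (starRingEnd ℂ γj) * N' + D') :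
    max N'.natDegree D'.natDegree ≤ max Nj.natDegree Dj.natDegree := by
  set c : ℂ := 1 - γj * starRingEnd ℂ γj with hc_def
  have hc : c ≠ 0 := by
    rw [hc_def, Complex.mul_conj, sub_ne_zero]
    intro h
    have h1 : Complex.normSq γj = 1 := by exact_mod_cast h.symm
    have h2 := Complex.sq_norm γj
    nlinarith [norm_nonneg γj]
  have key1 : C c * (X * N') = Nj - C γj * Dj := by
    rw [hN, hD, hc_def]
    simp only [map_sub, map_mul, map_one]
    ring
  have key2 : C c * D' = Dj - C (starRingEnd ℂ γj) * Nj := by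
    rw [hN, hD, hc_def]
    simp only [map_sub, map_mul, map_one]
    ring
  have hXN : (X * N').natDegree ≤ max Nj.natDegree Dj.natDegree := by
    rw [← natDegree_C_mul hc, key1]
    refine le_trans (natDegree_sub_le _ _) (max_le_max le_rfl ?_)
    exact le_trans (natDegree_mul_le) (by simp)
  have hDn : D'.natDegree ≤ max Nj.natDegree Dj.natDegree := by
    rw [← natDegree_C_mul hc, key2]
    refine le_trans (natDegree_sub_le _ _) (max_le ?_ ?_)
    · exact le_max_right _ _
    · exact le_trans (natDegree_mul_le) (by simp [le_max_left])
  have hNn : N'.natDegree ≤ max Nj.natDegree Dj.natDegree := by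
    refine le_trans ?_ hXN
    by_cases hN' : N' = 0
    · simp [hN']
    · rw [natDegree_mul X_ne_zero hN', natDegree_X]; omega
  exact max_le hNn hDn

private lemma schur_step_ge (γj : ℂ) (Nj Dj N' D' : Polynomial ℂ)
    (hN : Nj = X * N' + C γj * D') (hD : Dj = X * C (starRingEnd ℂ γj) * N' + D')
    (hne : N' ≠ 0) (hle : D'.degree ≤ N'.degree) :
    Nj ≠ 0 ∧ Dj.degree ≤ Nj.degree ∧ Nj.natDegree = N'.natDegree + 1 := by
  have hXN : (X * N').degree = N'.degree + 1 := by
    rw [degree_mul, degree_X, add_comm]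
  have hstep : N'.degree < N'.degree + 1 := by
    rw [degree_eq_natDegree hne]
    exact_mod_cast Nat.lt_succ_self _
  have hCD : (C γj * D').degree ≤ D'.degree := by
    calc (C γj * D').degree ≤ (C γj).degree + D'.degree := degree_mul_le _ _
      _ ≤ 0 + D'.degree := add_le_add degree_C_le le_rfl
      _ = D'.degree := zero_add _
  have hlt : (C γj * D').degree < (X * N').degree := by
    rw [hXN]; exact lt_of_le_of_lt (hCD.trans hle) hstep
  have hdegN : Nj.degree = N'.degree + 1 := by
    rw [hN, degree_add_eq_left_of_degree_lt hlt, hXN]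
  have hNjne : Nj ≠ 0 := by
    intro h
    rw [h, degree_zero] at hdegN
    rw [degree_eq_natDegree hne] at hdegN
    exact absurd hdegN.symm (by exact_mod_cast fun h => (by simpa using h : False))
  refine ⟨hNjne, ?_, ?_⟩
  · rw [hdegN, hD]
    refine le_trans (degree_add_le _ _) (max_le ?_ (le_trans hle (le_of_lt hstep)))
    calc (X * C (starRingEnd ℂ γj) * N').degree
        ≤ (X * C (starRingEnd ℂ γj)).degree + N'.degree := degree_mul_le _ _
      _ ≤ (X : Polynomial ℂ).degree + (C (starRingEnd ℂ γj)).degree + N'.degree := by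
          exact add_le_add (degree_mul_le _ _) le_rfl
      _ ≤ 1 + 0 + N'.degree := by
          exact add_le_add (add_le_add (le_of_eq degree_X) degree_C_le) le_rfl
      _ = N'.degree + 1 := by rw [add_zero, add_comm]
  · apply natDegree_eq_of_degree_eq_some
    rw [hdegN, degree_eq_natDegree hne]
    push_cast
    ring

/-- in the backward Schur algorithm
`N_j = z·N_{j+1} + γ_j·D_{j+1}`, `D_j = z·conj(γ_j)·N_{j+1} + D_{j+1}` started from a
coprime pair `(N_{n+1}, D_{n+1})` with `D_{n+1}(0) ≠ 0`, if the final function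
`f = f_0` has McMillan degree `d_0 ≤ n`, then the parameter `E = f_{n+1}` has McMillan
degree `d_{n+1} ≤ n` and vanishes at infinity, i.e. `deg N_{n+1} < deg D_{n+1}`
(strict degrees, `deg 0 = -∞`). -/
theorem stmt_14 (n : ℕ) (γ : ℕ → ℂ) (hγ : ∀ j ≤ n, ‖γ j‖ < 1)
    (N D : ℕ → Polynomial ℂ)
    (hcop : IsCoprime (N (n + 1)) (D (n + 1))) (hD0 : (D (n + 1)).eval 0 ≠ 0)
    (hN : ∀ j ≤ n, N j = X * N (j + 1) + C (γ j) * D (j + 1))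
    (hD : ∀ j ≤ n, D j = X * C (starRingEnd ℂ (γ j)) * N (j + 1) + D (j + 1))
    (d : ℕ → ℕ) (hd : ∀ j, d j = max (N j).natDegree (D j).natDegree)
    (h0 : d 0 ≤ n) :
    d (n + 1) ≤ n ∧ (N (n + 1)).degree < (D (n + 1)).degree := by
  have hDne : D (n + 1) ≠ 0 := fun h => hD0 (by simp [h])
  constructor
  · have key : ∀ j ≤ n, d (j + 1) ≤ d j := by
      intro j hj
      rw [hd, hd]
      exact schur_step_le (γ j) (hγ j hj) _ _ _ _ (hN j hj) (hD j hj)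
    have mono : ∀ k, k ≤ n + 1 → d k ≤ d 0 := by
      intro k
      induction k with
      | zero => intro _; exact le_rfl
      | succ m ih =>
        intro hm
        exact le_trans (key m (by omega)) (ih (by omega))
    exact le_trans (mono (n + 1) le_rfl) h0
  · by_contra hcon
    push_neg at hcon
    have hNne : N (n + 1) ≠ 0 := by
      intro h
      rw [h, degree_zero, le_bot_iff, degree_eq_bot] at hcon
      exact hDne hcon
    have main : ∀ m, m ≤ n + 1 → N (n + 1 - m) ≠ 0 ∧
        (D (n + 1 - m)).degree ≤ (N (n + 1 - m)).degree ∧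
        (N (n + 1)).natDegree + m ≤ (N (n + 1 - m)).natDegree := by
      intro m
      induction m with
      | zero => intro _; exact ⟨hNne, hcon, le_rfl⟩
      | succ k ih =>
        intro hk
        obtain ⟨h1, h2, h3⟩ := ih (by omega)
        have hidx : n + 1 - k = (n - k) + 1 := by omega
        rw [hidx] at h1 h2 h3
        have hjn : n - k ≤ n := by omega
        obtain ⟨a, b, c⟩ :=
          schur_step_ge (γ (n - k)) _ _ _ _ (hN _ hjn) (hD _ hjn) h1 h2
        have hidx2 : n + 1 - (k + 1) = n - k := by omega
        rw [hidx2]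
        exact ⟨a, b, by omega⟩
    obtain ⟨_, _, h3⟩ := main (n + 1) le_rfl
    simp only [Nat.sub_self] at h3
    have hle0 : (N 0).natDegree ≤ d 0 := by rw [hd]; exact le_max_left _ _
    omega
end

section
/- If deg D_{n+1} ≤ deg N_{n+1} (strict degree comparison with deg 0 = −∞, i.e. the parameter E = f_{n+1} does not vanish at infinity), then d_0 = d_{n+1} + n + 1; that is, the function f = f_0 obtained from E by n+1 steps of the backward Schur algorithm has McMillan degree exactly deg E + n + 1. -/
open Polynomial

/-- in the backward Schur algorithm
`N_j = z·N_{j+1} + γ_j·D_{j+1}`, `D_j = z·conj(γ_j)·N_{j+1} + D_{j+1}` started from a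
coprime pair `(N_{n+1}, D_{n+1})` with `D_{n+1}(0) ≠ 0`, if the parameter
`E = f_{n+1}` does not vanish at infinity, i.e. `deg D_{n+1} ≤ deg N_{n+1}` (strict
degrees, `deg 0 = -∞`), then the McMillan degrees `d_j = max(deg N_j, deg D_j)`
satisfy `d_0 = d_{n+1} + n + 1`. -/
theorem stmt_15 (n : ℕ) (γ : ℕ → ℂ) (hγ : ∀ j ≤ n, ‖γ j‖ < 1)
    (N D : ℕ → Polynomial ℂ)
    (hcop : IsCoprime (N (n + 1)) (D (n + 1))) (hD0 : (D (n + 1)).eval 0 ≠ 0)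
    (hN : ∀ j ≤ n, N j = X * N (j + 1) + C (γ j) * D (j + 1))
    (hD : ∀ j ≤ n, D j = X * C (starRingEnd ℂ (γ j)) * N (j + 1) + D (j + 1))
    (d : ℕ → ℕ) (hd : ∀ j, d j = max (N j).natDegree (D j).natDegree)
    (hE : (D (n + 1)).degree ≤ (N (n + 1)).degree) :
    d 0 = d (n + 1) + n + 1 := by
  have hDne : D (n + 1) ≠ 0 := by
    intro h; apply hD0; rw [h]; simp
  have hNne : N (n + 1) ≠ 0 := by
    intro h
    rw [h, degree_zero, le_bot_iff, degree_eq_bot] at hE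
    exact hDne hE
  set m := (N (n + 1)).natDegree with hm
  have hmdeg : (N (n + 1)).degree = (m : WithBot ℕ) := degree_eq_natDegree hNne
  have key : ∀ k, k ≤ n + 1 →
      (N (n + 1 - k)).degree = ((m + k : ℕ) : WithBot ℕ) ∧
      (D (n + 1 - k)).degree ≤ ((m + k : ℕ) : WithBot ℕ) := by
    intro k hk
    induction k with
    | zero => simpa using ⟨hmdeg, hE.trans_eq hmdeg⟩
    | succ k ih =>
      have hkn : k ≤ n := Nat.lt_succ_iff.mp hk
      obtain ⟨ihN, ihD⟩ := ih (le_of_lt hk)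
      have hj : n + 1 - k = (n - k) + 1 := by omega
      rw [hj] at ihN ihD
      have hj' : n + 1 - (k + 1) = n - k := by omega
      rw [hj']
      have hNj := hN (n - k) (by omega)
      have hDj := hD (n - k) (by omega)
      have hCD : ∀ (a : ℂ) (p : Polynomial ℂ), (C a * p).degree ≤ p.degree := by
        intro a p
        refine (degree_mul_le _ _).trans ?_
        calc (C a).degree + p.degree ≤ 0 + p.degree := by gcongr; exact degree_C_le
          _ = p.degree := zero_add _
      have hXN : (X * N (n - k + 1)).degree = ((m + k + 1 : ℕ) : WithBot ℕ) := by
        rw [degree_mul, degree_X, ihN]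
        push_cast; ring
      have hlt : ((m + k : ℕ) : WithBot ℕ) < ((m + k + 1 : ℕ) : WithBot ℕ) := by
        exact_mod_cast Nat.lt_succ_self _
      constructor
      · rw [hNj]
        rw [add_comm]
        rw [degree_add_eq_right_of_degree_lt, hXN]
        · push_cast; ring
        · rw [hXN]
          exact lt_of_le_of_lt ((hCD _ _).trans ihD) hlt
      · rw [hDj]
        refine (degree_add_le _ _).trans (max_le ?_ ?_)
        · calc (X * C (starRingEnd ℂ (γ (n - k))) * N (n - k + 1)).degree
              = (X * (C (starRingEnd ℂ (γ (n - k))) * N (n - k + 1))).degree := by ring_nf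
            _ ≤ _ := by
              rw [degree_mul, degree_X]
              have h2 := (hCD (starRingEnd ℂ (γ (n - k))) (N (n - k + 1))).trans (le_of_eq ihN)
              calc (1 : WithBot ℕ) + (C (starRingEnd ℂ (γ (n - k))) * N (n - k + 1)).degree
                  ≤ 1 + ((m + k : ℕ) : WithBot ℕ) := add_le_add_right h2 1
                _ = ((m + (k + 1) : ℕ) : WithBot ℕ) := by push_cast; ring
        · exact ihD.trans (le_of_lt (by exact_mod_cast Nat.lt_succ_self (m + k) : ((m + k : ℕ) : WithBot ℕ) < ((m + (k+1) : ℕ) : WithBot ℕ)))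
  obtain ⟨h0N, h0D⟩ := key (n + 1) le_rfl
  simp only [Nat.sub_self] at h0N h0D
  have hN0nat : (N 0).natDegree = m + (n + 1) := natDegree_eq_of_degree_eq_some h0N
  have hD0le : (D 0).natDegree ≤ m + (n + 1) := by
    by_cases h : D 0 = 0
    · simp [h]
    · exact_mod_cast (degree_eq_natDegree h ▸ h0D)
  have hDnat : (D (n + 1)).natDegree ≤ m := natDegree_le_natDegree hE
  rw [hd 0, hd (n + 1), hN0nat, max_eq_left hD0le, max_eq_left hDnat]
  omega
end

section
/- Let k be an integer with 1 ≤ k < n, let β_0, …, β_{k−1} and α_0, …, α_k be complex numbers, and set N_E(z) = β_0 + β_1 z + … + β_{k−1} z^{k−1} and D_E(z) = α_0 + α_1 z + … + α_k z^k. Then the polynomials N_f = z·B_n^{♯n}·N_E + A_n·D_E and D_f = z·A_n^{♯n}·N_E + B_n·D_E both have degree at most k if and only if for every ℓ with 0 ≤ ℓ ≤ n−1 both of the following hold: Σ_{j=0}^{min(n−ℓ−1, k−1)} conj(b_{n−ℓ−j−1})·β_{k−j−1} + Σ_{j=0}^{min(n−ℓ−1, k)} a_{ℓ+j+1}·α_{k−j}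 = 0 and Σ_{j=0}^{min(n−ℓ−1, k−1)} conj(a_{n−ℓ−j−1})·β_{k−j−1} + Σ_{j=0}^{min(n−ℓ−1, k)} b_{ℓ+j+1}·α_{k−j} = 0. (These are the necessary and sufficient conditions of Step 4″ of the algorithm for the case k < n.) -/
open Polynomial

lemma sum_trunc (M k : ℕ) (h : M ≤ k) (t : ℕ → ℂ) :
    ∑ i ∈ Finset.range k, (if i < M then t i else 0) = ∑ i ∈ Finset.range M, t i := by
  rw [← Finset.sum_filter]
  congr 1
  ext i
  simp only [Finset.mem_filter, Finset.mem_range]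
  omega

lemma coeff_sum_C_mul_X_pow (c : ℕ → ℂ) (m N : ℕ) :
    (∑ j ∈ Finset.range m, C (c j) * X ^ j).coeff N = if N < m then c N else 0 := by
  rw [Polynomial.finset_sum_coeff]
  simp only [Polynomial.coeff_C_mul, Polynomial.coeff_X_pow, mul_ite, mul_one, mul_zero]
  rw [Finset.sum_ite_eq (Finset.range m) N]
  simp [Nat.lt_succ_iff]

lemma coeff_mul_sum (P : Polynomial ℂ) (m d : ℕ) (c : ℕ → ℂ) (h : ∀ j < m, j ≤ d) :
    (P * ∑ j ∈ Finset.range m, C (c j) * X ^ j).coeff d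
      = ∑ j ∈ Finset.range m, c j * P.coeff (d - j) := by
  rw [Finset.mul_sum, Polynomial.finset_sum_coeff]
  refine Finset.sum_congr rfl fun j hj => ?_
  rw [Finset.mem_range] at hj
  rw [show P * (C (c j) * X ^ j) = C (c j) * P * X ^ j by ring,
      Polynomial.coeff_mul_X_pow', if_pos (h j hj), Polynomial.coeff_C_mul]



lemma sharp_coeff (k : ℕ) (P : Polynomial ℂ) (j : ℕ) :
    (sharp k P).coeff j =
      if j ≤ k then starRingEnd ℂ (P.coeff (k - j)) else 0 := by
  unfold sharp
  rw [coeff_sum_C_mul_X_pow]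
  simp [Nat.lt_succ_iff]

lemma sharp_natDegree_le (k : ℕ) (P : Polynomial ℂ) : (sharp k P).natDegree ≤ k :=
  Polynomial.natDegree_le_iff_coeff_eq_zero.mpr fun N hN => by
    rw [sharp_coeff, if_neg (by omega)]

lemma schurAB_natDegree (γ : ℕ → ℂ) (n : ℕ) (j : ℕ) :
    ((schurAB γ n j).1).natDegree ≤ j ∧ ((schurAB γ n j).2).natDegree ≤ j := by
  induction j with
  | zero => simp [schurAB]
  | succ j ih =>
    obtain ⟨h1, h2⟩ := ih
    constructor
    · refine (Polynomial.natDegree_add_le _ _).trans (max_le ?_ ?_)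
      · exact Polynomial.natDegree_mul_le.trans
          (by simp only [Polynomial.natDegree_X]; omega)
      · exact Polynomial.natDegree_mul_le.trans
          (by simp only [Polynomial.natDegree_C]; omega)
    · refine (Polynomial.natDegree_add_le _ _).trans (max_le ?_ ?_)
      · calc (X * C (starRingEnd ℂ (γ (n - j - 1))) * (schurAB γ n j).1).natDegree
            ≤ (X * C (starRingEnd ℂ (γ (n - j - 1)))).natDegree
              + ((schurAB γ n j).1).natDegree := Polynomial.natDegree_mul_le
          _ ≤ (X : Polynomial ℂ).natDegree + (C (starRingEnd ℂ (γ (n - j - 1)))).natDegree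
              + j := add_le_add Polynomial.natDegree_mul_le h1
          _ ≤ j + 1 := by simp only [Polynomial.natDegree_X, Polynomial.natDegree_C]; omega
      · omega

lemma coeff_formula (n k ℓ : ℕ) (hk1 : 1 ≤ k) (hℓ : ℓ < n)
    (P Q : Polynomial ℂ) (hP : P.natDegree ≤ n) (β α : ℕ → ℂ) :
    (X * sharp n Q * (∑ j ∈ Finset.range k, C (β j) * X ^ j)
      + P * (∑ j ∈ Finset.range (k + 1), C (α j) * X ^ j)).coeff (k + ℓ + 1) =
    (∑ j ∈ Finset.range (min (n - ℓ - 1) (k - 1) + 1),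
        starRingEnd ℂ (Q.coeff (n - ℓ - j - 1)) * β (k - j - 1)) +
    (∑ j ∈ Finset.range (min (n - ℓ - 1) k + 1),
        P.coeff (ℓ + j + 1) * α (k - j)) := by
  rw [Polynomial.coeff_add]
  congr 1
  · rw [mul_assoc, show k + ℓ + 1 = (k + ℓ) + 1 by ring, Polynomial.coeff_X_mul,
      coeff_mul_sum _ _ _ _ (fun j hj => by omega)]
    rw [← Finset.sum_range_reflect]
    rw [show min (n - ℓ - 1) (k - 1) + 1 = min (n - ℓ) k by omega]
    conv_rhs => rw [← sum_trunc (min (n - ℓ) k) k (min_le_right _ _)]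
    refine Finset.sum_congr rfl fun i hi => ?_
    rw [Finset.mem_range] at hi
    rw [show k + ℓ - (k - 1 - i) = ℓ + 1 + i by omega, sharp_coeff]
    by_cases hc : i < min (n - ℓ) k
    · rw [if_pos hc, if_pos (by omega), show n - (ℓ + 1 + i) = n - ℓ - i - 1 by omega,
        show k - 1 - i = k - i - 1 by omega]
      ring
    · rw [if_neg hc, if_neg (by omega), mul_zero]
  · rw [coeff_mul_sum _ _ _ _ (fun j hj => by omega), ← Finset.sum_range_reflect]
    rw [show min (n - ℓ - 1) k + 1 = min (n - ℓ) (k + 1) by omega]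
    conv_rhs => rw [← sum_trunc (min (n - ℓ) (k + 1)) (k + 1) (min_le_right _ _)]
    refine Finset.sum_congr rfl fun i hi => ?_
    rw [Finset.mem_range] at hi
    rw [show k + ℓ + 1 - (k + 1 - 1 - i) = ℓ + 1 + i by omega]
    by_cases hc : i < min (n - ℓ) (k + 1)
    · rw [if_pos hc, show ℓ + 1 + i = ℓ + i + 1 by ring, show k + 1 - 1 - i = k - i by omega]
      ring
    · rw [if_neg hc, Polynomial.coeff_eq_zero_of_natDegree_lt (by omega), mul_zero]

/-- Step 4″, case `k < n`: let `1 ≤ k < n`, `N_E = Σ_{j<k} β_j z^j`,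
`D_E = Σ_{j≤k} α_j z^j`. Then `N_f = z·B_n^{♯n}·N_E + A_n·D_E` and
`D_f = z·A_n^{♯n}·N_E + B_n·D_E` both have degree at most `k` if and only if for every
`0 ≤ ℓ ≤ n-1` both
`Σ_{j=0}^{min(n-ℓ-1,k-1)} conj(b_{n-ℓ-j-1})·β_{k-j-1}
  + Σ_{j=0}^{min(n-ℓ-1,k)} a_{ℓ+j+1}·α_{k-j} = 0` and
`Σ_{j=0}^{min(n-ℓ-1,k-1)} conj(a_{n-ℓ-j-1})·β_{k-j-1}
  + Σ_{j=0}^{min(n-ℓ-1,k)} b_{ℓ+j+1}·α_{k-j} = 0` hold,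
where `a_j`, `b_j` are the coefficients of `A_n`, `B_n`. -/
theorem stmt_18 (n : ℕ) (hn : 1 ≤ n) (γ : ℕ → ℂ)
    (hγ : ∀ j ≤ n, ‖γ j‖ < 1)
    (a b : ℕ → ℂ) (ha : ∀ j, a j = ((schurAB γ n n).1).coeff j)
    (hb : ∀ j, b j = ((schurAB γ n n).2).coeff j)
    (k : ℕ) (hk1 : 1 ≤ k) (hkn : k < n) (β α : ℕ → ℂ)
    (NE DE : Polynomial ℂ)
    (hNE : NE = ∑ j ∈ Finset.range k, C (β j) * X ^ j)
    (hDE : DE = ∑ j ∈ Finset.range (k + 1), C (α j) * X ^ j) :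
    ((X * sharp n (schurAB γ n n).2 * NE + (schurAB γ n n).1 * DE).natDegree ≤ k ∧
     (X * sharp n (schurAB γ n n).1 * NE + (schurAB γ n n).2 * DE).natDegree ≤ k) ↔
    ∀ ℓ < n,
      ((∑ j ∈ Finset.range (min (n - ℓ - 1) (k - 1) + 1),
          starRingEnd ℂ (b (n - ℓ - j - 1)) * β (k - j - 1)) +
       (∑ j ∈ Finset.range (min (n - ℓ - 1) k + 1),
          a (ℓ + j + 1) * α (k - j)) = 0) ∧
      ((∑ j ∈ Finset.range (min (n - ℓ - 1) (k - 1) + 1),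
          starRingEnd ℂ (a (n - ℓ - j - 1)) * β (k - j - 1)) +
       (∑ j ∈ Finset.range (min (n - ℓ - 1) k + 1),
          b (ℓ + j + 1) * α (k - j)) = 0) := by
  subst hNE hDE
  obtain ⟨hA, hB⟩ := schurAB_natDegree γ n n
  have hNEdeg : (∑ j ∈ Finset.range k, C (β j) * X ^ j).natDegree ≤ k - 1 :=
    Polynomial.natDegree_le_iff_coeff_eq_zero.mpr fun N hN => by
      rw [coeff_sum_C_mul_X_pow, if_neg (by omega)]
  have hDEdeg : (∑ j ∈ Finset.range (k + 1), C (α j) * X ^ j).natDegree ≤ k :=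
    Polynomial.natDegree_le_iff_coeff_eq_zero.mpr fun N hN => by
      rw [coeff_sum_C_mul_X_pow, if_neg (by omega)]
  have hdeg : ∀ P Q : Polynomial ℂ, P.natDegree ≤ n →
      (X * sharp n Q * (∑ j ∈ Finset.range k, C (β j) * X ^ j)
        + P * (∑ j ∈ Finset.range (k + 1), C (α j) * X ^ j)).natDegree ≤ n + k := by
    intro P Q hP
    refine (Polynomial.natDegree_add_le _ _).trans (max_le ?_ ?_)
    · calc (X * sharp n Q * (∑ j ∈ Finset.range k, C (β j) * X ^ j)).natDegree
          ≤ (X * sharp n Q).natDegree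
            + (∑ j ∈ Finset.range k, C (β j) * X ^ j).natDegree :=
          Polynomial.natDegree_mul_le
        _ ≤ ((X : Polynomial ℂ).natDegree + (sharp n Q).natDegree) + (k - 1) :=
          add_le_add Polynomial.natDegree_mul_le hNEdeg
        _ ≤ n + k := by
          have := sharp_natDegree_le n Q
          simp only [Polynomial.natDegree_X]
          omega
    · exact Polynomial.natDegree_mul_le.trans (by have := add_le_add hP hDEdeg; omega)
  have key : ∀ P Q : Polynomial ℂ, P.natDegree ≤ n →
      ((X * sharp n Q * (∑ j ∈ Finset.range k, C (β j) * X ^ j)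
        + P * (∑ j ∈ Finset.range (k + 1), C (α j) * X ^ j)).natDegree ≤ k ↔
       ∀ ℓ < n, (X * sharp n Q * (∑ j ∈ Finset.range k, C (β j) * X ^ j)
        + P * (∑ j ∈ Finset.range (k + 1), C (α j) * X ^ j)).coeff (k + ℓ + 1) = 0) := by
    intro P Q hP
    constructor
    · intro h ℓ hℓ
      exact Polynomial.coeff_eq_zero_of_natDegree_lt (by omega)
    · intro h
      refine Polynomial.natDegree_le_iff_coeff_eq_zero.mpr fun N hN => ?_
      by_cases hN2 : N ≤ n + k
      · have := h (N - k - 1) (by omega)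
        rwa [show k + (N - k - 1) + 1 = N by omega] at this
      · exact Polynomial.coeff_eq_zero_of_natDegree_lt (by have := hdeg P Q hP; omega)
  have e1 : ∀ ℓ, ℓ < n →
      ((∑ j ∈ Finset.range (min (n - ℓ - 1) (k - 1) + 1),
          starRingEnd ℂ (b (n - ℓ - j - 1)) * β (k - j - 1)) +
       (∑ j ∈ Finset.range (min (n - ℓ - 1) k + 1),
          a (ℓ + j + 1) * α (k - j)))
      = (X * sharp n (schurAB γ n n).2 * (∑ j ∈ Finset.range k, C (β j) * X ^ j)
        + (schurAB γ n n).1 * (∑ j ∈ Finset.range (k + 1), C (α j) * X ^ j)).coeff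
          (k + ℓ + 1) := by
    intro ℓ hℓ
    simp only [ha, hb]
    exact (coeff_formula n k ℓ hk1 hℓ _ _ hA β α).symm
  have e2 : ∀ ℓ, ℓ < n →
      ((∑ j ∈ Finset.range (min (n - ℓ - 1) (k - 1) + 1),
          starRingEnd ℂ (a (n - ℓ - j - 1)) * β (k - j - 1)) +
       (∑ j ∈ Finset.range (min (n - ℓ - 1) k + 1),
          b (ℓ + j + 1) * α (k - j)))
      = (X * sharp n (schurAB γ n n).1 * (∑ j ∈ Finset.range k, C (β j) * X ^ j)
        + (schurAB γ n n).2 * (∑ j ∈ Finset.range (k + 1), C (α j) * X ^ j)).coeff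
          (k + ℓ + 1) := by
    intro ℓ hℓ
    simp only [ha, hb]
    exact (coeff_formula n k ℓ hk1 hℓ _ _ hB β α).symm
  rw [key _ _ hA, key _ _ hB]
  constructor
  · rintro ⟨h1, h2⟩ ℓ hℓ
    rw [e1 ℓ hℓ, e2 ℓ hℓ]
    exact ⟨h1 ℓ hℓ, h2 ℓ hℓ⟩
  · intro h
    exact ⟨fun ℓ hℓ => (e1 ℓ hℓ).symm.trans (h ℓ hℓ).1,
           fun ℓ hℓ => (e2 ℓ hℓ).symm.trans (h ℓ hℓ).2⟩
end
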